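/- arXiv:1602.05343 — 6 statements merged into one kernel-verified Lean document; each statement's English description precedes it below -/
import Mathlib

section
/- Let x, t ∈ ℝ with x ≠ t and 1 - 2tx + t² ≠ 0, and let f : ℝ → ℝ be the function f(s) = (1 - 2sx + s²)⁻¹. Then for every integer N ≥ 1 one has 2^N · N! · f(t)^{N+1} = Σ_{i=1}^{N} a(i,N) · (x - t)^{i-2N} · f^{(i)}(t), where f^{(i)}(t) denotes the i-th derivative of f at t and (x - t)^{i-2N} is an integer (possibly negative) power. -/
open Finset Topology

-- iteratedDerivWithin equals iteratedDeriv on open sets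
private lemma iDW_eq {f : ℝ → ℝ} {s : Set ℝ} (hs : IsOpen s) {y : ℝ} (hy : y ∈ s) (n : ℕ) :
    iteratedDerivWithin n f s y = iteratedDeriv n f y := by
  rw [iteratedDerivWithin_eq_iteratedFDerivWithin, iteratedDeriv_eq_iteratedFDeriv,
    iteratedFDerivWithin_of_isOpen n hs hy]

private lemma diffAt_iter {x : ℝ} {f : ℝ → ℝ}
    (hf : ∀ s : ℝ, f s = (1 - 2 * s * x + s ^ 2)⁻¹)
    (n : ℕ) {t : ℝ} (ht : 1 - 2 * t * x + t ^ 2 ≠ 0) :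
    DifferentiableAt ℝ (iteratedDeriv n f) t := by
  set U : Set ℝ := {s | 1 - 2 * s * x + s ^ 2 ≠ 0} with hU
  have hcont : Continuous fun s : ℝ => 1 - 2 * s * x + s ^ 2 := by continuity
  have hUopen : IsOpen U := isOpen_compl_singleton.preimage hcont
  have htU : t ∈ U := ht
  have hsmooth : ContDiffOn ℝ (⊤ : ℕ∞) f U := by
    have : ContDiffOn ℝ (⊤ : ℕ∞) (fun s : ℝ => 1 - 2 * s * x + s ^ 2) U :=
      (ContDiff.contDiffOn (by fun_prop))
    have h2 := this.inv (fun s hs => hs)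
    have : f = fun s : ℝ => (1 - 2 * s * x + s ^ 2)⁻¹ := funext hf
    rwa [this]
  have hd : DifferentiableOn ℝ (iteratedDerivWithin n f U) U :=
    hsmooth.differentiableOn_iteratedDerivWithin
      (by exact_mod_cast WithTop.coe_lt_top _) hUopen.uniqueDiffOn
  have hdat : DifferentiableAt ℝ (iteratedDerivWithin n f U) t :=
    hd.differentiableAt (hUopen.mem_nhds htU)
  have hev : iteratedDerivWithin n f U =ᶠ[𝓝 t] iteratedDeriv n f := by
    filter_upwards [hUopen.mem_nhds htU] with s hs using iDW_eq hUopen hs n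
  exact hev.symm.differentiableAt_iff.mpr hdat

private lemma hasDeriv_iter {x : ℝ} {f : ℝ → ℝ}
    (hf : ∀ s : ℝ, f s = (1 - 2 * s * x + s ^ 2)⁻¹)
    (n : ℕ) {t : ℝ} (ht : 1 - 2 * t * x + t ^ 2 ≠ 0) :
    HasDerivAt (iteratedDeriv n f) (iteratedDeriv (n + 1) f t) t := by
  have h := (diffAt_iter hf n ht).hasDerivAt
  rwa [iteratedDeriv_succ]

private lemma hasDeriv_f {x : ℝ} {f : ℝ → ℝ}
    (hf : ∀ s : ℝ, f s = (1 - 2 * s * x + s ^ 2)⁻¹)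
    {t : ℝ} (ht : 1 - 2 * t * x + t ^ 2 ≠ 0) :
    HasDerivAt f (2 * (x - t) * f t ^ 2) t := by
  have h1 : HasDerivAt (fun s : ℝ => 1 - 2 * s * x + s ^ 2) (2 * t - 2 * x) t := by
    have h := (((hasDerivAt_id t).mul_const x).const_mul 2).const_sub 1 |>.fun_add
      (hasDerivAt_pow 2 t)
    have h2 : HasDerivAt (fun s : ℝ => 1 - 2 * s * x + s ^ 2)
        (-(2 * (1 * x)) + (2 : ℕ) * t ^ (2 - 1)) t := by
      simpa [mul_assoc] using h
    convert h2 using 1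
    push_cast
    ring
  have h2 := h1.fun_inv ht
  have hfe : f = fun s : ℝ => (1 - 2 * s * x + s ^ 2)⁻¹ := funext hf
  rw [← hfe] at h2
  refine h2.congr_deriv ?_
  rw [hf t]
  field_simp
  ring

/-- the nonlinear differential equation
`2^N · N! · f(t)^{N+1} = Σ_{i=1}^N a(i,N) (x-t)^{i-2N} f^{(i)}(t)`
satisfied by `f(s) = (1 - 2sx + s²)⁻¹`, where `a : ℕ → ℕ → ℝ` is the family
defined by the recursion `a(1,1) = 1`, `a(1,N+1) = (2N-1)a(1,N)`,
`a(N+1,N+1) = a(N,N)`, `a(i,N+1) = a(i-1,N) + (2N-i)a(i,N)` for `2 ≤ i ≤ N`. -/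
theorem stmt0
    (a : ℕ → ℕ → ℝ)
    (ha11 : a 1 1 = 1)
    (ha1 : ∀ N : ℕ, 1 ≤ N → a 1 (N + 1) = (2 * (N : ℝ) - 1) * a 1 N)
    (hadiag : ∀ N : ℕ, 1 ≤ N → a (N + 1) (N + 1) = a N N)
    (harec : ∀ N i : ℕ, 2 ≤ i → i ≤ N →
      a i (N + 1) = a (i - 1) N + (2 * (N : ℝ) - (i : ℝ)) * a i N)
    (x t : ℝ) (hxt : x ≠ t) (hD : 1 - 2 * t * x + t ^ 2 ≠ 0)
    (f : ℝ → ℝ) (hf : ∀ s : ℝ, f s = (1 - 2 * s * x + s ^ 2)⁻¹)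
    (N : ℕ) (hN : 1 ≤ N) :
    2 ^ N * (Nat.factorial N : ℝ) * f t ^ (N + 1) =
      ∑ i ∈ Finset.Icc 1 N,
        a i N * (x - t) ^ ((i : ℤ) - 2 * (N : ℤ)) * iteratedDeriv i f t := by
  have key : ∀ M : ℕ, 1 ≤ M → ∀ t' : ℝ, 1 - 2 * t' * x + t' ^ 2 ≠ 0 → x ≠ t' →
      2 ^ M * (Nat.factorial M : ℝ) * f t' ^ (M + 1) =
      ∑ i ∈ Finset.Icc 1 M,
        a i M * (x - t') ^ ((i : ℤ) - 2 * (M : ℤ)) * iteratedDeriv i f t' := by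
    intro M hM
    induction M, hM using Nat.le_induction with
    | base =>
      intro t' ht' hxt'
      have hu : x - t' ≠ 0 := sub_ne_zero.2 hxt'
      have hderiv := (hasDeriv_f hf ht').deriv
      simp only [Finset.Icc_self, Finset.sum_singleton, ha11, iteratedDeriv_one, hderiv]
      rw [show (((1:ℕ) : ℤ) - 2 * ((1:ℕ) : ℤ)) = -1 by norm_num, zpow_neg_one]
      rw [Nat.factorial_one]
      field_simp
      ring
    | succ M hM IH =>
      intro t0 ht0 hxt0
      have hu : x - t0 ≠ 0 := sub_ne_zero.2 hxt0
      -- open set V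
      set V : Set ℝ := {s | (1 - 2 * s * x + s ^ 2 ≠ 0) ∧ x ≠ s} with hV
      have hcont : Continuous fun s : ℝ => 1 - 2 * s * x + s ^ 2 := by fun_prop
      have hVopen : IsOpen V := by
        have h1 : IsOpen {s : ℝ | 1 - 2 * s * x + s ^ 2 ≠ 0} :=
          isOpen_compl_singleton.preimage hcont
        have h2 : IsOpen {s : ℝ | x ≠ s} := by
          have : {s : ℝ | x ≠ s} = {x}ᶜ := by ext s; simp [ne_comm]
          rw [this]; exact isOpen_compl_singleton
        rw [hV, Set.setOf_and]
        exact h1.inter h2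
      have ht0V : t0 ∈ V := ⟨ht0, hxt0⟩
      -- derivative of LHS
      have hg : HasDerivAt (fun t' => 2 ^ M * (Nat.factorial M : ℝ) * f t' ^ (M + 1))
          (2 ^ M * (Nat.factorial M : ℝ) *
            (((M + 1 : ℕ) : ℝ) * f t0 ^ (M + 1 - 1) * (2 * (x - t0) * f t0 ^ 2))) t0 :=
        ((hasDeriv_f hf ht0).pow (M + 1)).const_mul _
      simp only [Nat.add_sub_cancel] at hg
      -- derivative of each RHS term
      have hterm : ∀ i ∈ Finset.Icc 1 M,
          HasDerivAt (fun t' => a i M * (x - t') ^ ((i : ℤ) - 2 * (M : ℤ)) * iteratedDeriv i f t')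
            ((2 * (M : ℝ) - i) * a i M * (x - t0) ^ ((i : ℤ) - 2 * (M : ℤ) - 1) *
                iteratedDeriv i f t0
              + a i M * (x - t0) ^ (((i + 1 : ℕ) : ℤ) - 2 * (M : ℤ) - 1) *
                iteratedDeriv (i + 1) f t0) t0 := by
        intro i hi
        have hzp : HasDerivAt (fun t' : ℝ => (x - t') ^ ((i : ℤ) - 2 * (M : ℤ)))
            ((((i : ℤ) - 2 * (M : ℤ)) : ℝ) * (x - t0) ^ ((i : ℤ) - 2 * (M : ℤ) - 1) * (-1)) t0 := by
          have hbase := hasDerivAt_zpow ((i : ℤ) - 2 * (M : ℤ)) (x - t0) (Or.inl hu)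
          have hsub : HasDerivAt (fun t' : ℝ => x - t') (-1) t0 := by
            simpa using (hasDerivAt_id t0).const_sub x
          simpa [Function.comp_def] using hbase.comp t0 hsub
        have h3 := (hzp.const_mul (a i M)).fun_mul (hasDeriv_iter hf i ht0)
        refine h3.congr_deriv ?_
        rw [show (((i + 1 : ℕ) : ℤ) - 2 * (M : ℤ) - 1) = ((i : ℤ) - 2 * (M : ℤ)) by
          push_cast; ring]
        push_cast
        ring
      have hh : HasDerivAt (fun t' => ∑ i ∈ Finset.Icc 1 M,
            a i M * (x - t') ^ ((i : ℤ) - 2 * (M : ℤ)) * iteratedDeriv i f t')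
          (∑ i ∈ Finset.Icc 1 M,
            ((2 * (M : ℝ) - i) * a i M * (x - t0) ^ ((i : ℤ) - 2 * (M : ℤ) - 1) *
                iteratedDeriv i f t0
              + a i M * (x - t0) ^ (((i + 1 : ℕ) : ℤ) - 2 * (M : ℤ) - 1) *
                iteratedDeriv (i + 1) f t0)) t0 :=
        HasDerivAt.fun_sum hterm
      have hEv : (fun t' => 2 ^ M * (Nat.factorial M : ℝ) * f t' ^ (M + 1)) =ᶠ[𝓝 t0]
          (fun t' => ∑ i ∈ Finset.Icc 1 M,
            a i M * (x - t') ^ ((i : ℤ) - 2 * (M : ℤ)) * iteratedDeriv i f t') := by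
        filter_upwards [hVopen.mem_nhds ht0V] with s hs using IH s hs.1 hs.2
      have hdd := hEv.deriv_eq
      rw [hg.deriv, hh.deriv] at hdd
      -- sum manipulation
      have hIcc : Finset.Icc 1 M = insert 1 (Finset.Icc 2 M) := by
        ext j; simp only [Finset.mem_Icc, Finset.mem_insert]; omega
      have h1notin : (1 : ℕ) ∉ Finset.Icc 2 M := by simp
      have hre : (∑ i ∈ Finset.Icc 1 M,
            a i M * (x - t0) ^ (((i + 1 : ℕ) : ℤ) - 2 * (M : ℤ) - 1) * iteratedDeriv (i + 1) f t0)
          = ∑ j ∈ Finset.Icc 2 (M + 1),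
            a (j - 1) M * (x - t0) ^ ((j : ℤ) - 2 * (M : ℤ) - 1) * iteratedDeriv j f t0 := by
        rw [show Finset.Icc 2 (M + 1) = (Finset.Icc 1 M).map (addRightEmbedding 1) from by
          rw [Finset.map_add_right_Icc]]
        rw [Finset.sum_map]
        refine Finset.sum_congr rfl fun i hi => ?_
        simp [addRightEmbedding]
      have hsum2 : (∑ i ∈ Finset.Icc 1 (M + 1),
            a i (M + 1) * (x - t0) ^ ((i : ℤ) - 2 * (M : ℤ) - 1) * iteratedDeriv i f t0)
          = ∑ i ∈ Finset.Icc 1 M,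
            ((2 * (M : ℝ) - i) * a i M * (x - t0) ^ ((i : ℤ) - 2 * (M : ℤ) - 1) *
                iteratedDeriv i f t0
              + a i M * (x - t0) ^ (((i + 1 : ℕ) : ℤ) - 2 * (M : ℤ) - 1) *
                iteratedDeriv (i + 1) f t0) := by
        rw [Finset.sum_add_distrib, hre]
        rw [Finset.sum_Icc_succ_top (by omega : 1 ≤ M + 1)]
        rw [Finset.sum_Icc_succ_top (by omega : 2 ≤ M + 1)]
        rw [hIcc, Finset.sum_insert h1notin, Finset.sum_insert h1notin]
        have hmid : (∑ i ∈ Finset.Icc 2 M,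
              a i (M + 1) * (x - t0) ^ ((i : ℤ) - 2 * (M : ℤ) - 1) * iteratedDeriv i f t0)
            = ∑ i ∈ Finset.Icc 2 M,
              ((2 * (M : ℝ) - i) * a i M * (x - t0) ^ ((i : ℤ) - 2 * (M : ℤ) - 1) *
                  iteratedDeriv i f t0
                + a (i - 1) M * (x - t0) ^ ((i : ℤ) - 2 * (M : ℤ) - 1) * iteratedDeriv i f t0) := by
          refine Finset.sum_congr rfl fun i hi => ?_
          rw [Finset.mem_Icc] at hi
          rw [harec M i hi.1 hi.2]
          ring
        have hc1 : a 1 (M + 1) * (x - t0) ^ (((1 : ℕ) : ℤ) - 2 * (M : ℤ) - 1) *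
              iteratedDeriv 1 f t0
            = (2 * (M : ℝ) - (1 : ℕ)) * a 1 M * (x - t0) ^ (((1 : ℕ) : ℤ) - 2 * (M : ℤ) - 1) *
              iteratedDeriv 1 f t0 := by
          rw [ha1 M hM]
          push_cast
          ring
        have htop : a (M + 1) (M + 1) * (x - t0) ^ (((M + 1 : ℕ) : ℤ) - 2 * (M : ℤ) - 1) *
              iteratedDeriv (M + 1) f t0
            = a (M + 1 - 1) M * (x - t0) ^ (((M + 1 : ℕ) : ℤ) - 2 * (M : ℤ) - 1) *
              iteratedDeriv (M + 1) f t0 := by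
          rw [hadiag M hM]
          simp
        rw [hmid, hc1, htop, Finset.sum_add_distrib]
        ring
      -- conclude
      have hR : (x - t0) * (∑ i ∈ Finset.Icc 1 (M + 1),
            a i (M + 1) * (x - t0) ^ ((i : ℤ) - 2 * ((M + 1 : ℕ) : ℤ)) * iteratedDeriv i f t0)
          = ∑ i ∈ Finset.Icc 1 (M + 1),
            a i (M + 1) * (x - t0) ^ ((i : ℤ) - 2 * (M : ℤ) - 1) * iteratedDeriv i f t0 := by
        rw [Finset.mul_sum]
        refine Finset.sum_congr rfl fun i hi => ?_
        rw [show ((i : ℤ) - 2 * (M : ℤ) - 1) = ((i : ℤ) - 2 * ((M + 1 : ℕ) : ℤ)) + 1 by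
          push_cast; ring, zpow_add_one₀ hu]
        ring
      apply mul_left_cancel₀ hu
      calc (x - t0) * (2 ^ (M + 1) * ((M + 1).factorial : ℝ) * f t0 ^ (M + 1 + 1))
          = 2 ^ M * (Nat.factorial M : ℝ) *
              (((M + 1 : ℕ) : ℝ) * f t0 ^ M * (2 * (x - t0) * f t0 ^ 2)) := by
            rw [Nat.factorial_succ]; push_cast; ring
        _ = ∑ i ∈ Finset.Icc 1 M,
            ((2 * (M : ℝ) - i) * a i M * (x - t0) ^ ((i : ℤ) - 2 * (M : ℤ) - 1) *
                iteratedDeriv i f t0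
              + a i M * (x - t0) ^ (((i + 1 : ℕ) : ℤ) - 2 * (M : ℤ) - 1) *
                iteratedDeriv (i + 1) f t0) := hdd
        _ = ∑ i ∈ Finset.Icc 1 (M + 1),
            a i (M + 1) * (x - t0) ^ ((i : ℤ) - 2 * (M : ℤ) - 1) * iteratedDeriv i f t0 :=
            hsum2.symm
        _ = (x - t0) * (∑ i ∈ Finset.Icc 1 (M + 1),
            a i (M + 1) * (x - t0) ^ ((i : ℤ) - 2 * ((M + 1 : ℕ) : ℤ)) *
              iteratedDeriv i f t0) := hR.symm
  exact key N hN t hD hxt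
end

section
/- For every integer N ≥ 1 and every i with 2 ≤ i ≤ N+1, a(i,N+1) = Σ_{k=0}^{N+1-i} 2^k · (N - i/2)_k · a(i-1, N-k), where (N - i/2)_k is the falling factorial of the real number N - i/2. -/
/-- The falling factorial `(y)_k = y(y-1)⋯(y-k+1)` of a real number, `(y)_0 = 1`. -/
noncomputable def fallingFactorial (y : ℝ) (k : ℕ) : ℝ :=
  ∏ j ∈ Finset.range k, (y - (j : ℝ))

lemma ff_zero (y : ℝ) : fallingFactorial y 0 = 1 := by simp [fallingFactorial]

lemma ff_succ (y : ℝ) (k : ℕ) :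
    fallingFactorial y (k + 1) = y * fallingFactorial (y - 1) k := by
  unfold fallingFactorial
  rw [Finset.prod_range_succ']
  rw [mul_comm]
  congr 1
  · simp
  · apply Finset.prod_congr rfl
    intro j _
    push_cast
    ring

/-- for `N ≥ 1` and `2 ≤ i ≤ N+1`,
`a(i,N+1) = Σ_{k=0}^{N+1-i} 2^k (N - i/2)_k a(i-1, N-k)`,
where `a` is the family defined by the recursion `a(1,1) = 1`,
`a(1,N+1) = (2N-1)a(1,N)`, `a(N+1,N+1) = a(N,N)`,
`a(i,N+1) = a(i-1,N) + (2N-i)a(i,N)` for `2 ≤ i ≤ N`. -/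
theorem stmt3
    (a : ℕ → ℕ → ℝ)
    (ha11 : a 1 1 = 1)
    (ha1 : ∀ N : ℕ, 1 ≤ N → a 1 (N + 1) = (2 * (N : ℝ) - 1) * a 1 N)
    (hadiag : ∀ N : ℕ, 1 ≤ N → a (N + 1) (N + 1) = a N N)
    (harec : ∀ N i : ℕ, 2 ≤ i → i ≤ N →
      a i (N + 1) = a (i - 1) N + (2 * (N : ℝ) - (i : ℝ)) * a i N)
    (N i : ℕ) (hN : 1 ≤ N) (hi2 : 2 ≤ i) (hiN : i ≤ N + 1) :
    a i (N + 1) =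
      ∑ k ∈ Finset.range (N + 2 - i),
        2 ^ k * fallingFactorial ((N : ℝ) - (i : ℝ) / 2) k * a (i - 1) (N - k) := by
  induction N, hN using Nat.le_induction generalizing i with
  | base =>
    have hi : i = 2 := by omega
    subst hi
    rw [hadiag 1 le_rfl]
    simp [fallingFactorial]
  | succ N hN ih =>
    rcases eq_or_lt_of_le hiN with hEq | hlt
    · subst hEq
      have h := hadiag (N + 1) (by omega)
      simp only [show N + 1 + 2 - (N + 1 + 1) = 1 by omega, Finset.sum_range_one]
      simpa [ff_zero] using h
    · have hiN' : i ≤ N + 1 := by omega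
      have hrec := harec (N + 1) i hi2 hiN'
      have hih := ih i hi2 (by omega)
      have hr : N + 1 + 2 - i = (N + 2 - i) + 1 := by omega
      rw [hr, Finset.sum_range_succ']
      have key : ∀ k : ℕ,
          2 ^ (k + 1) * fallingFactorial ((↑(N + 1) : ℝ) - (i : ℝ) / 2) (k + 1) *
              a (i - 1) (N + 1 - (k + 1))
            = (2 * (↑(N + 1) : ℝ) - (i : ℝ)) *
              (2 ^ k * fallingFactorial ((N : ℝ) - (i : ℝ) / 2) k * a (i - 1) (N - k)) := by
        intro k
        have hnk : N + 1 - (k + 1) = N - k := by omega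
        rw [hnk, ff_succ]
        have h1 : (↑(N + 1) : ℝ) - (i : ℝ) / 2 - 1 = (N : ℝ) - (i : ℝ) / 2 := by
          push_cast; ring
        rw [h1]
        push_cast
        ring
      rw [Finset.sum_congr rfl (fun k _ => key k), ← Finset.mul_sum, ← hih]
      rw [hrec]
      simp [ff_zero]
      push_cast
      ring
end

section
/- For every integer N ≥ 1, every integer n ≥ 0, and every real x ≠ 0, U_n^{(N+1)}(x) = (1/(2^N · N!)) · Σ_{i=1}^{N} a(i,N) · Σ_{l=0}^{n} C(2N+n-l-i-1, n-l) · U_{l+i}(x) · x^{i+l-2N-n} · (l+i)_i, where x^{i+l-2N-n} is an integer (possibly negative) power of x. -/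
/-- `D = 1 - 2x·t + t²` as a formal power series in `t` over `ℝ`. -/
noncomputable def Dser (x : ℝ) : PowerSeries ℝ :=
  1 - PowerSeries.C (2 * x) * PowerSeries.X + PowerSeries.X ^ 2

/-- The higher-order Chebyshev polynomial of the second kind `U_n^{(α)}(x)`,
the `n`-th coefficient of `(D⁻¹)^α`. -/
noncomputable def chebU (x : ℝ) (α n : ℕ) : ℝ :=
  PowerSeries.coeff n ((Dser x)⁻¹ ^ α)

open PowerSeries Finset


noncomputable def Gser (x : ℝ) : PowerSeries ℝ := PowerSeries.C x - PowerSeries.X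

noncomputable def Hser (x : ℝ) (m : ℕ) : PowerSeries ℝ :=
  PowerSeries.mk fun k => (Nat.choose (m + k - 1) k : ℝ) * x ^ (-(m : ℤ) - (k : ℤ))

lemma constCoeff_D (x : ℝ) : constantCoeff (Dser x) = 1 := by
  simp [Dser]

lemma D_mul_Dinv (x : ℝ) : Dser x * (Dser x)⁻¹ = 1 :=
  PowerSeries.mul_inv_cancel _ (by simp [constCoeff_D])

lemma dG (x : ℝ) : d⁄dX ℝ (Gser x) = -1 := by
  simp [Gser]

lemma dD (x : ℝ) : d⁄dX ℝ (Dser x) = -(2 : ℝ⟦X⟧) * Gser x := by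
  have h1 : d⁄dX ℝ (PowerSeries.C (2*x) * X) = PowerSeries.C (2*x) := by
    rw [Derivation.leibniz]
    simp [smul_eq_mul]
  have h2 : d⁄dX ℝ ((X : ℝ⟦X⟧) ^ 2) = 2 * X := by
    rw [sq, Derivation.leibniz]
    simp [smul_eq_mul]; ring
  have h3 : (PowerSeries.C (2*x)) = 2 * PowerSeries.C x := by
    rw [map_mul, map_ofNat]
  rw [Dser, map_add, map_sub, h1, h2, Derivation.map_one_eq_zero, h3, Gser]
  ring

lemma dDinv (x : ℝ) : d⁄dX ℝ (Dser x)⁻¹ = 2 * Gser x * (Dser x)⁻¹ ^ 2 := by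
  rw [derivative_inv', dD]
  ring

lemma C_natCast (m : ℕ) : (PowerSeries.C) (m : ℝ) = (m : ℝ⟦X⟧) := by
  exact_mod_cast map_natCast (PowerSeries.C (R := ℝ)) m

lemma dGpow (x : ℝ) (k : ℕ) :
    d⁄dX ℝ ((Gser x) ^ (k+1)) = -(PowerSeries.C ((k:ℝ)+1)) * (Gser x) ^ k := by
  rw [Derivation.leibniz_pow, dG]
  simp only [Nat.add_sub_cancel, smul_eq_mul, nsmul_eq_mul, map_add, map_one, C_natCast, Nat.cast_add, Nat.cast_one]
  ring

lemma dDinvpow (x : ℝ) (m : ℕ) :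
    d⁄dX ℝ ((Dser x)⁻¹ ^ (m+1)) =
      PowerSeries.C (2*((m:ℝ)+1)) * (Gser x * (Dser x)⁻¹ ^ (m+2)) := by
  rw [Derivation.leibniz_pow, dDinv]
  simp only [Nat.add_sub_cancel, smul_eq_mul, nsmul_eq_mul, map_add, map_one, map_mul,
    map_ofNat, C_natCast, Nat.cast_add, Nat.cast_one]
  ring

lemma dCmul (r : ℝ) (f : ℝ⟦X⟧) :
    d⁄dX ℝ (PowerSeries.C r * f) = PowerSeries.C r * d⁄dX ℝ f := by
  rw [Derivation.leibniz]
  simp [smul_eq_mul]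

lemma G_mul_nsmul_pow (x : ℝ) (j : ℕ) :
    Gser x * ((j : ℝ⟦X⟧) * (Gser x) ^ (j-1)) = (j : ℝ⟦X⟧) * (Gser x) ^ j := by
  cases j with
  | zero => simp
  | succ k => rw [Nat.add_sub_cancel, pow_succ]; ring

lemma H0 (x : ℝ) : Hser x 0 = 1 := by
  ext k
  rw [Hser, coeff_mk]
  cases k with
  | zero => simp
  | succ k =>
      rw [Nat.choose_eq_zero_of_lt (by omega)]
      simp [PowerSeries.coeff_one]

lemma GHsucc (x : ℝ) (hx : x ≠ 0) (m : ℕ) :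
    Gser x * Hser x (m+1) = Hser x m := by
  ext k
  rw [Gser, sub_mul, map_sub, PowerSeries.coeff_C_mul, Hser, Hser]
  cases k with
  | zero =>
      simp only [coeff_mk, coeff_zero_X_mul, Nat.choose_zero_right, Nat.cast_one, one_mul,
        Nat.cast_zero, sub_zero]
      have h0 : (-(m:ℤ)) = (-(((m+1:ℕ)):ℤ)) + 1 := by push_cast; ring
      rw [h0, zpow_add_one₀ hx]
      ring
  | succ k =>
      rw [coeff_succ_X_mul, coeff_mk, coeff_mk, coeff_mk]
      have h1 : m + 1 + (k+1) - 1 = (m + k) + 1 := by omega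
      have h2 : m + 1 + k - 1 = m + k := by omega
      have h3 : m + (k+1) - 1 = m + k := by omega
      rw [h1, h2, h3, Nat.choose_succ_succ (m+k) k]
      have e1 : (-(((m+1:ℕ)):ℤ) - ((k+1:ℕ):ℤ)) = (-(m:ℤ) - ((k+1:ℕ):ℤ)) - 1 := by
        push_cast; ring
      have e2 : (-(((m+1:ℕ)):ℤ) - ((k:ℕ):ℤ)) = (-(m:ℤ) - ((k+1:ℕ):ℤ)) := by
        push_cast; ring
      rw [e1, e2, zpow_sub_one₀ hx]
      push_cast
      field_simp
      ring

lemma GH (x : ℝ) (hx : x ≠ 0) : ∀ m : ℕ, (Gser x)^m * Hser x m = 1 := by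
  intro m
  induction m with
  | zero => simp [H0]
  | succ m IH =>
      calc (Gser x)^(m+1) * Hser x (m+1)
          = (Gser x)^m * (Gser x * Hser x (m+1)) := by ring
        _ = (Gser x)^m * Hser x m := by rw [GHsucc x hx m]
        _ = 1 := IH

lemma coeff_iter_deriv : ∀ (i : ℕ) (f : ℝ⟦X⟧) (l : ℕ),
    PowerSeries.coeff l ((⇑(d⁄dX ℝ))^[i] f)
      = ((l+i).descFactorial i : ℝ) * PowerSeries.coeff (l+i) f := by
  intro i
  induction i with
  | zero => intro f l; simp
  | succ i IH =>
      intro f l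
      rw [Function.iterate_succ_apply, IH _ l, PowerSeries.coeff_derivative]
      have h1 : l + (i+1) = (l + i) + 1 := by omega
      rw [h1, Nat.succ_descFactorial_succ]
      push_cast
      ring

lemma ff_desc : ∀ (k m : ℕ), k ≤ m →
    (∏ j ∈ Finset.range k, ((m:ℝ) - (j : ℝ))) = (m.descFactorial k : ℝ) := by
  intro k
  induction k with
  | zero => intro m _; simp
  | succ k IH =>
      intro m hk
      rw [Finset.prod_range_succ, IH m (by omega), Nat.descFactorial_succ]
      rw [Nat.cast_mul, Nat.cast_sub (by omega)]
      ring

lemma keylemma (a : ℕ → ℕ → ℝ)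
    (ha11 : a 1 1 = 1)
    (ha1 : ∀ N : ℕ, 1 ≤ N → a 1 (N + 1) = (2 * (N : ℝ) - 1) * a 1 N)
    (hadiag : ∀ N : ℕ, 1 ≤ N → a (N + 1) (N + 1) = a N N)
    (harec : ∀ N i : ℕ, 2 ≤ i → i ≤ N →
      a i (N + 1) = a (i - 1) N + (2 * (N : ℝ) - (i : ℝ)) * a i N)
    (x : ℝ) : ∀ M : ℕ,
    PowerSeries.C ((2:ℝ)^(M+1) * (M+1).factorial) *
        ((Gser x)^(2*M+1) * (Dser x)⁻¹^(M+2)) =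
      ∑ j ∈ Finset.range (M+1), PowerSeries.C (a (j+1) (M+1)) *
        ((Gser x)^j * (⇑(d⁄dX ℝ))^[j+1] (Dser x)⁻¹) := by
  intro M
  induction M with
  | zero =>
      norm_num [Finset.sum_range_one, ha11, Function.iterate_one, dD, map_ofNat]
      ring
  | succ M IH =>
      set Dinv := (Dser x)⁻¹ with hDinvdef
      set T : ℕ → ℝ⟦X⟧ := fun j => (Gser x)^j * (⇑(d⁄dX ℝ))^[j+1] Dinv with hT
      -- per-term derivative computation
      have hiter : ∀ j : ℕ, (⇑(d⁄dX ℝ))^[j+2] Dinv = d⁄dX ℝ ((⇑(d⁄dX ℝ))^[j+1] Dinv) := by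
        intro j; exact Function.iterate_succ_apply' _ _ _
      have hterm : ∀ j : ℕ, Gser x * d⁄dX ℝ (T j) + PowerSeries.C (2*(M:ℝ)+1) * T j
          = PowerSeries.C ((2*(M:ℝ)+1) - j) * T j + T (j+1) := by
        intro j
        have hdG : d⁄dX ℝ ((Gser x)^j) = -((j:ℝ⟦X⟧) * (Gser x)^(j-1)) := by
          rw [Derivation.leibniz_pow, dG]
          simp [smul_eq_mul, nsmul_eq_mul]
        have : d⁄dX ℝ (T j) = (Gser x)^j * (⇑(d⁄dX ℝ))^[j+2] Dinv
            - (⇑(d⁄dX ℝ))^[j+1] Dinv * ((j:ℝ⟦X⟧) * (Gser x)^(j-1)) := by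
          rw [hT]
          simp only [Derivation.leibniz, smul_eq_mul, hdG, hiter j]
          ring
        rw [this, hT]
        simp only [map_sub, C_natCast, map_add, map_mul, map_one, map_ofNat,
          Nat.cast_add, Nat.cast_one]
        have hGj := G_mul_nsmul_pow x j
        calc Gser x * ((Gser x)^j * (⇑(d⁄dX ℝ))^[j+2] Dinv
              - (⇑(d⁄dX ℝ))^[j+1] Dinv * ((j:ℝ⟦X⟧) * (Gser x)^(j-1)))
              + (2*(PowerSeries.C (M:ℝ))+1) * ((Gser x)^j * (⇑(d⁄dX ℝ))^[j+1] Dinv)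
            = (Gser x)^(j+1) * (⇑(d⁄dX ℝ))^[j+2] Dinv
              - (⇑(d⁄dX ℝ))^[j+1] Dinv * (Gser x * ((j:ℝ⟦X⟧) * (Gser x)^(j-1)))
              + (2*(PowerSeries.C (M:ℝ))+1) * ((Gser x)^j * (⇑(d⁄dX ℝ))^[j+1] Dinv) := by
              ring
          _ = _ := by rw [hGj, C_natCast]; ring
      -- LHS computation
      set c : ℝ := (2:ℝ)^(M+1) * (M+1).factorial with hc
      have h1 : d⁄dX ℝ (Dinv ^ (M+2)) =
          PowerSeries.C (2*(((M+1:ℕ):ℝ)+1)) * (Gser x * Dinv ^ (M+3)) := dDinvpow x (M+1)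
      have hGd : d⁄dX ℝ ((Gser x)^(2*M+1)) =
          -(PowerSeries.C (((2*M:ℕ):ℝ)+1)) * (Gser x)^(2*M) := dGpow x (2*M)
      have L : Gser x * d⁄dX ℝ (PowerSeries.C c * ((Gser x)^(2*M+1) * Dinv^(M+2)))
            + PowerSeries.C (2*(M:ℝ)+1) * (PowerSeries.C c * ((Gser x)^(2*M+1) * Dinv^(M+2)))
          = PowerSeries.C ((2:ℝ)^(M+1+1) * (M+1+1).factorial) *
            ((Gser x)^(2*(M+1)+1) * Dinv^(M+1+2)) := by
        have hd : d⁄dX ℝ ((Gser x)^(2*M+1) * Dinv^(M+2))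
            = (Gser x)^(2*M+1) * (PowerSeries.C (2*(((M+1:ℕ):ℝ)+1)) * (Gser x * Dinv ^ (M+3)))
              + Dinv^(M+2) * (-(PowerSeries.C (((2*M:ℕ):ℝ)+1)) * (Gser x)^(2*M)) := by
          rw [Derivation.leibniz, h1, hGd]; simp [smul_eq_mul]
        have hcc : (2:ℝ)^(M+1+1) * ((M+1+1).factorial : ℝ) = c * (2*(((M+1:ℕ):ℝ)+1)) := by
          rw [hc, Nat.factorial_succ]; push_cast; ring
        rw [dCmul, hd, hcc]
        simp only [map_mul, map_add, map_one, map_ofNat, C_natCast, Nat.cast_add,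
          Nat.cast_mul, Nat.cast_ofNat, Nat.cast_one]
        ring
      -- RHS computation
      have hdsum : d⁄dX ℝ (∑ j ∈ Finset.range (M+1),
            PowerSeries.C (a (j+1) (M+1)) * T j)
          = ∑ j ∈ Finset.range (M+1), PowerSeries.C (a (j+1) (M+1)) * d⁄dX ℝ (T j) := by
        rw [map_sum]; exact Finset.sum_congr rfl (fun j _ => dCmul _ _)
      have R : Gser x * d⁄dX ℝ (∑ j ∈ Finset.range (M+1),
            PowerSeries.C (a (j+1) (M+1)) * T j)
          + PowerSeries.C (2*(M:ℝ)+1) * ∑ j ∈ Finset.range (M+1),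
            PowerSeries.C (a (j+1) (M+1)) * T j
          = ∑ j ∈ Finset.range (M+1+1), PowerSeries.C (a (j+1) (M+1+1)) * T j := by
        rw [hdsum, Finset.mul_sum, Finset.mul_sum, ← Finset.sum_add_distrib]
        have hstep : ∀ j ∈ Finset.range (M+1),
            Gser x * (PowerSeries.C (a (j+1) (M+1)) * d⁄dX ℝ (T j))
              + PowerSeries.C (2*(M:ℝ)+1) * (PowerSeries.C (a (j+1) (M+1)) * T j)
            = PowerSeries.C (a (j+1) (M+1) * ((2*(M:ℝ)+1) - j)) * T j
              + PowerSeries.C (a (j+1) (M+1)) * T (j+1) := by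
          intro j _
          have := hterm j
          calc Gser x * (PowerSeries.C (a (j+1) (M+1)) * d⁄dX ℝ (T j))
                + PowerSeries.C (2*(M:ℝ)+1) * (PowerSeries.C (a (j+1) (M+1)) * T j)
              = PowerSeries.C (a (j+1) (M+1)) *
                  (Gser x * d⁄dX ℝ (T j) + PowerSeries.C (2*(M:ℝ)+1) * T j) := by ring
            _ = PowerSeries.C (a (j+1) (M+1)) *
                  (PowerSeries.C ((2*(M:ℝ)+1) - j) * T j + T (j+1)) := by rw [this]
            _ = _ := by rw [map_mul]; ring
        rw [Finset.sum_congr rfl hstep, Finset.sum_add_distrib]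
        -- now reassemble
        rw [Finset.sum_range_succ' (fun j => PowerSeries.C (a (j+1) (M+1) * ((2*(M:ℝ)+1) - j)) * T j) M]
        rw [Finset.sum_range_succ (fun j => PowerSeries.C (a (j+1) (M+1)) * T (j+1)) M]
        rw [Finset.sum_range_succ (fun j => PowerSeries.C (a (j+1) (M+1+1)) * T j) (M+1)]
        rw [Finset.sum_range_succ' (fun j => PowerSeries.C (a (j+1) (M+1+1)) * T j) M]
        have e0c : a (0+1) (M+1) * ((2*(M:ℝ)+1) - ((0:ℕ):ℝ)) = a (0+1) (M+1+1) := by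
          show a 1 (M+1) * _ = a 1 (M+1+1)
          rw [ha1 (M+1) (by omega)]
          push_cast
          ring
        have e0 : PowerSeries.C (a (0+1) (M+1) * ((2*(M:ℝ)+1) - ((0:ℕ):ℝ))) * T 0
            = PowerSeries.C (a (0+1) (M+1+1)) * T 0 := by rw [e0c]
        have etop : PowerSeries.C (a (M+1) (M+1)) * T (M+1)
            = PowerSeries.C (a (M+1+1) (M+1+1)) * T (M+1) := by
          rw [hadiag (M+1) (Nat.le_add_left 1 M)]
        have emid : ∀ j ∈ Finset.range M,
            PowerSeries.C (a (j+1+1) (M+1) * ((2*(M:ℝ)+1) - ((j+1:ℕ):ℝ))) * T (j+1)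
              + PowerSeries.C (a (j+1) (M+1)) * T (j+1)
            = PowerSeries.C (a (j+1+1) (M+1+1)) * T (j+1) := by
          intro j hj
          have hjM : j < M := Finset.mem_range.mp hj
          have hr := harec (M+1) (j+1+1) (by omega) (by omega)
          have hsub : (j+1+1) - 1 = j+1 := rfl
          rw [hsub] at hr
          rw [← add_mul, ← map_add]
          congr 1
          rw [hr]
          push_cast
          ring
        calc (∑ j ∈ Finset.range M,
                PowerSeries.C (a (j+1+1) (M+1) * ((2*(M:ℝ)+1) - ((j+1:ℕ):ℝ))) * T (j+1))
              + PowerSeries.C (a (0+1) (M+1) * ((2*(M:ℝ)+1) - ((0:ℕ):ℝ))) * T 0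
              + ((∑ j ∈ Finset.range M, PowerSeries.C (a (j+1) (M+1)) * T (j+1))
                + PowerSeries.C (a (M+1) (M+1)) * T (M+1))
            = (∑ j ∈ Finset.range M, (PowerSeries.C (a (j+1+1) (M+1) * ((2*(M:ℝ)+1) - ((j+1:ℕ):ℝ))) * T (j+1)
                + PowerSeries.C (a (j+1) (M+1)) * T (j+1)))
              + PowerSeries.C (a (0+1) (M+1) * ((2*(M:ℝ)+1) - ((0:ℕ):ℝ))) * T 0
              + PowerSeries.C (a (M+1) (M+1)) * T (M+1) := by
              rw [Finset.sum_add_distrib]; ring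
          _ = _ := by
              rw [Finset.sum_congr rfl emid, etop, e0]
      calc PowerSeries.C ((2:ℝ)^(M+1+1) * (M+1+1).factorial) *
              ((Gser x)^(2*(M+1)+1) * Dinv^(M+1+2))
          = Gser x * d⁄dX ℝ (PowerSeries.C c * ((Gser x)^(2*M+1) * Dinv^(M+2)))
            + PowerSeries.C (2*(M:ℝ)+1) * (PowerSeries.C c * ((Gser x)^(2*M+1) * Dinv^(M+2))) := L.symm
        _ = Gser x * d⁄dX ℝ (∑ j ∈ Finset.range (M+1), PowerSeries.C (a (j+1) (M+1)) * T j)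
            + PowerSeries.C (2*(M:ℝ)+1) * ∑ j ∈ Finset.range (M+1), PowerSeries.C (a (j+1) (M+1)) * T j := by
            rw [IH]
        _ = _ := R


lemma chebU1 (x : ℝ) (m : ℕ) : chebU x 1 m = PowerSeries.coeff m (Dser x)⁻¹ := by
  rw [chebU, pow_one]

/-- for `N ≥ 1`, `n ≥ 0` and real `x ≠ 0`,
`U_n^{(N+1)}(x) = (1/(2^N N!)) Σ_{i=1}^N a(i,N) Σ_{l=0}^n
  C(2N+n-l-i-1, n-l) U_{l+i}(x) x^{i+l-2N-n} (l+i)_i`,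
where `a` is the family defined by the recursion `a(1,1) = 1`,
`a(1,N+1) = (2N-1)a(1,N)`, `a(N+1,N+1) = a(N,N)`,
`a(i,N+1) = a(i-1,N) + (2N-i)a(i,N)` for `2 ≤ i ≤ N`. -/
theorem stmt5
    (a : ℕ → ℕ → ℝ)
    (ha11 : a 1 1 = 1)
    (ha1 : ∀ N : ℕ, 1 ≤ N → a 1 (N + 1) = (2 * (N : ℝ) - 1) * a 1 N)
    (hadiag : ∀ N : ℕ, 1 ≤ N → a (N + 1) (N + 1) = a N N)
    (harec : ∀ N i : ℕ, 2 ≤ i → i ≤ N →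
      a i (N + 1) = a (i - 1) N + (2 * (N : ℝ) - (i : ℝ)) * a i N)
    (x : ℝ) (hx : x ≠ 0) (N n : ℕ) (hN : 1 ≤ N) :
    chebU x (N + 1) n =
      (1 / (2 ^ N * (Nat.factorial N : ℝ))) *
        ∑ i ∈ Finset.Icc 1 N, a i N *
          ∑ l ∈ Finset.range (n + 1),
            (Nat.choose (2 * N + n - l - i - 1) (n - l) : ℝ) *
              chebU x 1 (l + i) *
              x ^ ((i : ℤ) + (l : ℤ) - 2 * (N : ℤ) - (n : ℤ)) *
              fallingFactorial ((l : ℝ) + (i : ℝ)) i := by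
  obtain ⟨M, rfl⟩ : ∃ M, N = M + 1 := ⟨N - 1, by omega⟩
  have hkey := keylemma a ha11 ha1 hadiag harec x M
  set Dinv := (Dser x)⁻¹ with hDinvdef
  set c : ℝ := (2:ℝ)^(M+1) * (M+1).factorial with hc
  set S : ℝ⟦X⟧ := ∑ j ∈ Finset.range (M+1), PowerSeries.C (a (j+1) (M+1)) *
      ((⇑(d⁄dX ℝ))^[j+1] Dinv * Hser x (2*M+1-j)) with hS
  have hGne : (Gser x)^(2*M+1) ≠ 0 := by
    apply pow_ne_zero
    intro h
    have h2 := congrArg (PowerSeries.constantCoeff) h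
    simp [Gser] at h2
    exact hx h2
  have hmulS : (Gser x)^(2*M+1) * S = (Gser x)^(2*M+1) * (PowerSeries.C c * Dinv^(M+2)) := by
    rw [hS, Finset.mul_sum]
    have hterm : ∀ j ∈ Finset.range (M+1),
        (Gser x)^(2*M+1) * (PowerSeries.C (a (j+1) (M+1)) *
            ((⇑(d⁄dX ℝ))^[j+1] Dinv * Hser x (2*M+1-j)))
        = PowerSeries.C (a (j+1) (M+1)) * ((Gser x)^j * (⇑(d⁄dX ℝ))^[j+1] Dinv) := by
      intro j hj
      have hjM : j < M + 1 := Finset.mem_range.mp hj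
      have hpow : (Gser x)^(2*M+1) = (Gser x)^j * (Gser x)^(2*M+1-j) := by
        rw [← pow_add]; congr 1; omega
      calc (Gser x)^(2*M+1) * (PowerSeries.C (a (j+1) (M+1)) *
              ((⇑(d⁄dX ℝ))^[j+1] Dinv * Hser x (2*M+1-j)))
          = PowerSeries.C (a (j+1) (M+1)) * (((Gser x)^j * (⇑(d⁄dX ℝ))^[j+1] Dinv) *
              ((Gser x)^(2*M+1-j) * Hser x (2*M+1-j))) := by rw [hpow]; ring
        _ = _ := by rw [GH x hx (2*M+1-j)]; ring
    rw [Finset.sum_congr rfl hterm, ← hkey]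
    ring
  have hSc : S = PowerSeries.C c * Dinv^(M+2) := mul_left_cancel₀ hGne hmulS
  have hcne : c ≠ 0 := by
    rw [hc]
    have h1 : (0:ℝ) < ((M+1).factorial : ℝ) := by
      exact_mod_cast Nat.factorial_pos (M+1)
    positivity
  have hcoeffS : PowerSeries.coeff n S = c * PowerSeries.coeff n (Dinv^(M+2)) := by
    rw [hSc, PowerSeries.coeff_C_mul]
  -- compute coeff n S termwise and match the statement sum
  have hsum : (∑ j ∈ Finset.range (M+1), a (j+1) (M+1) *
          ∑ l ∈ Finset.range (n + 1),
            (Nat.choose (2 * (M+1) + n - l - (j+1) - 1) (n - l) : ℝ) *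
              chebU x 1 (l + (j+1)) *
              x ^ (((j+1 : ℕ) : ℤ) + (l : ℤ) - 2 * ((M+1 : ℕ) : ℤ) - (n : ℤ)) *
              fallingFactorial ((l : ℝ) + ((j+1 : ℕ) : ℝ)) (j+1))
      = PowerSeries.coeff n S := by
    rw [hS, map_sum]
    refine Finset.sum_congr rfl ?_
    intro j hj
    have hjM : j < M + 1 := Finset.mem_range.mp hj
    rw [PowerSeries.coeff_C_mul]
    congr 1
    rw [PowerSeries.coeff_mul, Finset.Nat.sum_antidiagonal_eq_sum_range_succ_mk]
    refine Finset.sum_congr rfl ?_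
    intro l hl
    have hln : l ≤ n := by
      have := Finset.mem_range.mp hl; omega
    rw [coeff_iter_deriv, Hser, coeff_mk]
    have hch : 2 * (M+1) + n - l - (j+1) - 1 = (2*M+1-j) + (n-l) - 1 := by omega
    have hzp : ((j+1 : ℕ) : ℤ) + (l : ℤ) - 2 * ((M+1 : ℕ) : ℤ) - (n : ℤ)
        = -((2*M+1-j : ℕ) : ℤ) - ((n - l : ℕ) : ℤ) := by omega
    have hff : fallingFactorial ((l : ℝ) + ((j+1 : ℕ) : ℝ)) (j+1)
        = (((l + (j+1)).descFactorial (j+1) : ℕ) : ℝ) := by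
      rw [fallingFactorial]
      have hd := ff_desc (j+1) (l + (j+1)) (by omega)
      have hcast : ((l:ℝ) + ((j+1 : ℕ):ℝ)) = ((l + (j+1) : ℕ) : ℝ) := by push_cast; ring
      rw [hcast, hd]
    rw [hch, hzp, hff, chebU1]
    push_cast
    ring
  have hIcc : (∑ i ∈ Finset.Icc 1 (M+1), a i (M+1) *
          ∑ l ∈ Finset.range (n + 1),
            (Nat.choose (2 * (M+1) + n - l - i - 1) (n - l) : ℝ) *
              chebU x 1 (l + i) *
              x ^ ((i : ℤ) + (l : ℤ) - 2 * ((M+1 : ℕ) : ℤ) - (n : ℤ)) *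
              fallingFactorial ((l : ℝ) + (i : ℝ)) i)
      = (∑ j ∈ Finset.range (M+1), a (j+1) (M+1) *
          ∑ l ∈ Finset.range (n + 1),
            (Nat.choose (2 * (M+1) + n - l - (j+1) - 1) (n - l) : ℝ) *
              chebU x 1 (l + (j+1)) *
              x ^ (((j+1 : ℕ) : ℤ) + (l : ℤ) - 2 * ((M+1 : ℕ) : ℤ) - (n : ℤ)) *
              fallingFactorial ((l : ℝ) + ((j+1 : ℕ) : ℝ)) (j+1)) := by
    refine Finset.sum_nbij' (fun i => i - 1) (fun j => j + 1) ?_ ?_ ?_ ?_ ?_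
    · intro i hi
      simp only [Finset.mem_Icc] at hi
      simp only [Finset.mem_range]
      omega
    · intro j hj
      simp only [Finset.mem_range] at hj
      simp only [Finset.mem_Icc]
      omega
    · intro i hi
      simp only [Finset.mem_Icc] at hi
      omega
    · intro j hj
      omega
    · intro i hi
      simp only [Finset.mem_Icc] at hi
      have hrw : i - 1 + 1 = i := by omega
      rw [hrw]
  -- finish
  have hgoalL : chebU x (M + 1 + 1) n = PowerSeries.coeff n (Dinv^(M+2)) := rfl
  rw [hgoalL, hIcc, hsum, hcoeffS]
  field_simp
end

section
/- For every integer N ≥ 1, every integer n ≥ 0, and every real x ≠ 0, Σ_{l=0}^{n} p_l^{(N+1)}(x) · p_{n-l}^{(N+1)}(x) = (1/(2^N · N!)) · Σ_{i=1}^{N} a(i,N) · Σ_{l=0}^{n} C(2N+n-l-i-1, n-l) · U_{l+i}(x) · (l+i)_i · x^{i+l-2N-n}, where x^{i+l-2N-n} is an integer (possibly negative) power of x. -/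
open PowerSeries

noncomputable def User (x : ℝ) : PowerSeries ℝ := PowerSeries.C x - PowerSeries.X


noncomputable def Vser (x : ℝ) (m : ℕ) : PowerSeries ℝ :=
  PowerSeries.mk fun k => (Nat.choose (m + k - 1) k : ℝ) * x⁻¹ ^ (m + k)

lemma Vser_zero (x : ℝ) : Vser x 0 = 1 := by
  ext k
  cases k with
  | zero => simp [Vser]
  | succ k => simp [Vser, show (0 + (k+1) - 1) = k by omega, Nat.choose_eq_zero_of_lt (Nat.lt_succ_self k)]

lemma Vser_mul_U (x : ℝ) (hx : x ≠ 0) (m : ℕ) :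
    Vser x (m + 1) * User x = Vser x m := by
  ext k
  rw [User, mul_sub, map_sub]
  rw [mul_comm _ (PowerSeries.C x)]
  rw [PowerSeries.coeff_C_mul]
  cases k with
  | zero =>
      rw [mul_comm _ PowerSeries.X, PowerSeries.coeff_zero_X_mul]
      simp [Vser, pow_succ]
      field_simp
  | succ k =>
      rw [mul_comm _ PowerSeries.X, PowerSeries.coeff_succ_X_mul]
      simp only [Vser, PowerSeries.coeff_mk]
      have hch : (m + 1 + (k+1) - 1).choose (k+1) = (m + 1 + k - 1).choose (k+1) + (m+1+k-1).choose k := by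
        have h1 : m + 1 + (k+1) - 1 = (m + k) + 1 := by omega
        have h2 : m + 1 + k - 1 = m + k := by omega
        rw [h1, h2, Nat.choose_succ_succ' (m+k) k]
        omega
      rw [hch]
      have hx1 : x⁻¹ ^ (m + 1 + (k + 1)) = x⁻¹ * x⁻¹ ^ (m + (k+1)) := by
        rw [← pow_succ']; ring_nf
      push_cast
      rw [hx1]
      have h2 : m + 1 + k = m + (k+1) := by omega
      rw [h2]
      field_simp
      ring

lemma Vser_mul_pow (x : ℝ) (hx : x ≠ 0) (m : ℕ) :
    Vser x m * (User x) ^ m = 1 := by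
  induction m with
  | zero => simp [Vser_zero]
  | succ m ih =>
      rw [pow_succ, ← mul_assoc]
      rw [show Vser x (m+1) * User x ^ m * User x = Vser x (m+1) * User x * User x ^ m by ring]
      rw [Vser_mul_U x hx m, ih]

lemma User_ne_zero (x : ℝ) (hx : x ≠ 0) : User x ≠ 0 := by
  intro h
  have := congrArg (PowerSeries.constantCoeff) h
  simp [User] at this
  exact hx this

open scoped PowerSeries in
lemma deriv_User (x : ℝ) : d⁄dX ℝ (User x) = -1 := by
  simp [User]

lemma constCoeff_Dser (x : ℝ) : PowerSeries.constantCoeff (Dser x) = 1 := by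
  simp [Dser]

lemma Dser_inv_mul (x : ℝ) : (Dser x)⁻¹ * Dser x = 1 :=
  PowerSeries.inv_mul_cancel _ (by rw [constCoeff_Dser]; norm_num)

open scoped PowerSeries in
lemma deriv_Dser (x : ℝ) : d⁄dX ℝ (Dser x) = PowerSeries.C (-2) * User x := by
  have h2 : (d⁄dX ℝ) (2 : PowerSeries ℝ) = 0 := by
    rw [← map_ofNat (PowerSeries.C (R := ℝ)) 2]; simp
  simp [Dser, User, pow_two, Derivation.leibniz, map_ofNat, h2]
  ring

open scoped PowerSeries in
lemma deriv_F (x : ℝ) : d⁄dX ℝ ((Dser x)⁻¹) = PowerSeries.C 2 * User x * ((Dser x)⁻¹) ^ 2 := by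
  rw [PowerSeries.derivative_inv', deriv_Dser]
  have : PowerSeries.C (R := ℝ) (-2) = -(PowerSeries.C 2) := by simp
  rw [this]
  ring


open scoped PowerSeries in
noncomputable def Fd (x : ℝ) : ℕ → PowerSeries ℝ
  | 0 => (Dser x)⁻¹
  | (i+1) => d⁄dX ℝ (Fd x i)

lemma coeff_Fd (x : ℝ) (i m : ℕ) :
    PowerSeries.coeff m (Fd x i) =
      fallingFactorial ((m : ℝ) + (i : ℝ)) i * PowerSeries.coeff (m + i) ((Dser x)⁻¹) := by
  induction i generalizing m with
  | zero => simp [Fd, fallingFactorial]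
  | succ i ih =>
      rw [Fd, PowerSeries.coeff_derivative, ih (m+1)]
      have : fallingFactorial ((m:ℝ) + (i+1:ℕ)) (i+1)
          = fallingFactorial (((m+1:ℕ):ℝ) + (i:ℝ)) i * ((m:ℝ)+1) := by
        rw [fallingFactorial, fallingFactorial, Finset.prod_range_succ]
        push_cast
        rw [show ((m:ℝ) + ((i:ℝ)+1) - (i:ℝ)) = (m:ℝ)+1 by ring]
        congr 1
        apply Finset.prod_congr rfl
        intro j hj
        ring
      rw [this, show m + 1 + i = m + (i+1) by omega]
      ring

open scoped PowerSeries in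
lemma wstep (x : ℝ) (i : ℕ) :
    User x * (d⁄dX ℝ ((User x) ^ (i+1) * Fd x (i+1))) =
      PowerSeries.C (-((i:ℝ)+1)) * ((User x) ^ (i+1) * Fd x (i+1))
        + (User x) ^ (i+2) * Fd x (i+2) := by
  rw [Derivation.leibniz, Derivation.leibniz_pow, deriv_User]
  rw [show Fd x (i+2) = d⁄dX ℝ (Fd x (i+1)) from rfl]
  simp only [smul_eq_mul]
  have hc : ((i+1 : ℕ) : PowerSeries ℝ) = PowerSeries.C ((i:ℝ)+1) := by
    rw [← map_natCast (PowerSeries.C (R := ℝ)) (i+1)]; push_cast; ring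
  rw [nsmul_eq_mul, hc]
  simp only [Nat.add_sub_cancel]
  have hneg : PowerSeries.C (-((i:ℝ)+1)) = -(PowerSeries.C ((i:ℝ)+1)) := by simp
  rw [hneg]
  ring

open scoped PowerSeries in
lemma rstep (x : ℝ) (m k : ℕ) :
    User x * (d⁄dX ℝ ((User x) ^ (m+1) * ((Dser x)⁻¹) ^ (k+1))) =
      PowerSeries.C (-((m:ℝ)+1)) * ((User x) ^ (m+1) * ((Dser x)⁻¹) ^ (k+1))
        + PowerSeries.C (2*((k:ℝ)+1)) * ((User x) ^ (m+3) * ((Dser x)⁻¹) ^ (k+2)) := by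
  rw [Derivation.leibniz, Derivation.leibniz_pow, Derivation.leibniz_pow, deriv_User, deriv_F]
  simp only [smul_eq_mul]
  have hc1 : ((m+1 : ℕ) : PowerSeries ℝ) = PowerSeries.C ((m:ℝ)+1) := by
    rw [← map_natCast (PowerSeries.C (R := ℝ)) (m+1)]; push_cast; ring
  have hc2 : ((k+1 : ℕ) : PowerSeries ℝ) = PowerSeries.C ((k:ℝ)+1) := by
    rw [← map_natCast (PowerSeries.C (R := ℝ)) (k+1)]; push_cast; ring
  rw [nsmul_eq_mul, nsmul_eq_mul, hc1, hc2]
  simp only [Nat.add_sub_cancel]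
  have hneg : PowerSeries.C (-((m:ℝ)+1)) = -(PowerSeries.C ((m:ℝ)+1)) := by simp
  have h2 : PowerSeries.C (2*((k:ℝ)+1)) = PowerSeries.C 2 * PowerSeries.C ((k:ℝ)+1) := by
    rw [← map_mul]
  rw [hneg, h2]
  ring

lemma reindex
    (a : ℕ → ℕ → ℝ)
    (ha1 : ∀ N : ℕ, 1 ≤ N → a 1 (N + 1) = (2 * (N : ℝ) - 1) * a 1 N)
    (hadiag : ∀ N : ℕ, 1 ≤ N → a (N + 1) (N + 1) = a N N)
    (harec : ∀ N i : ℕ, 2 ≤ i → i ≤ N →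
      a i (N + 1) = a (i - 1) N + (2 * (N : ℝ) - (i : ℝ)) * a i N)
    (M : ℕ) (w : ℕ → PowerSeries ℝ) :
    ∑ j ∈ Finset.range (M+2), PowerSeries.C (a (j+1) (M+2)) * w (j+1)
      = ∑ j ∈ Finset.range (M+1), PowerSeries.C (a (j+1) (M+1)) *
          (PowerSeries.C (2*((M:ℝ)+1) - ((j:ℝ)+1)) * w (j+1) + w (j+1+1)) := by
  have e1 : (∑ j ∈ Finset.range (M+2), PowerSeries.C (a (j+1) (M+2)) * w (j+1))
      = (∑ j ∈ Finset.range M, PowerSeries.C (a (j+1+1) (M+2)) * w (j+1+1))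
        + PowerSeries.C (a (M+1+1) (M+2)) * w (M+1+1)
        + PowerSeries.C (a 1 (M+2)) * w 1 := by
    rw [Finset.sum_range_succ' (fun j => PowerSeries.C (a (j+1) (M+2)) * w (j+1)) (M+1)]
    rw [Finset.sum_range_succ]
  have e2 : (∑ j ∈ Finset.range (M+1), PowerSeries.C (a (j+1) (M+1)) *
          (PowerSeries.C (2*((M:ℝ)+1) - ((j:ℝ)+1)) * w (j+1) + w (j+1+1)))
      = ((∑ j ∈ Finset.range M, PowerSeries.C (a (j+1+1) (M+1)) *
            (PowerSeries.C (2*((M:ℝ)+1) - (((j:ℕ)+1+1:ℕ):ℝ)) * w (j+1+1)))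
          + PowerSeries.C (a 1 (M+1)) * (PowerSeries.C (2*((M:ℝ)+1) - 1) * w 1))
        + ((∑ j ∈ Finset.range M, PowerSeries.C (a (j+1) (M+1)) * w (j+1+1))
          + PowerSeries.C (a (M+1) (M+1)) * w (M+1+1)) := by
    rw [Finset.sum_congr rfl (fun j _ => mul_add (PowerSeries.C (a (j+1) (M+1)))
          (PowerSeries.C (2*((M:ℝ)+1) - ((j:ℝ)+1)) * w (j+1)) (w (j+1+1)))]
    rw [Finset.sum_add_distrib]
    congr 1
    · rw [Finset.sum_range_succ' (fun j => PowerSeries.C (a (j+1) (M+1)) *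
          (PowerSeries.C (2*((M:ℝ)+1) - ((j:ℝ)+1)) * w (j+1))) M]
      congr 1
      · apply Finset.sum_congr rfl
        intro j hj
        push_cast
        ring_nf
      · push_cast
        ring_nf
    · rw [Finset.sum_range_succ]
  rw [e1, e2]
  have hw1 : PowerSeries.C (a 1 (M+2)) = PowerSeries.C (2*((M:ℝ)+1) - 1) * PowerSeries.C (a 1 (M+1)) := by
    rw [← map_mul]
    congr 1
    have h := ha1 (M+1) (by omega)
    push_cast at h ⊢
    linarith [h]
  have hwtop : a (M+1+1) (M+2) = a (M+1) (M+1) := hadiag (M+1) (by omega)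
  have hmid : ∀ j ∈ Finset.range M,
      PowerSeries.C (a (j+1+1) (M+2)) * w (j+1+1)
        = PowerSeries.C (a (j+1+1) (M+1)) *
            (PowerSeries.C (2*((M:ℝ)+1) - (((j:ℕ)+1+1:ℕ):ℝ)) * w (j+1+1))
          + PowerSeries.C (a (j+1) (M+1)) * w (j+1+1) := by
    intro j hj
    simp only [Finset.mem_range] at hj
    have h : a (j+1+1) (M+1+1) = a (j+1+1-1) (M+1) + (2 * ((M+1 : ℕ) : ℝ) - ((j+1+1 : ℕ) : ℝ)) * a (j+1+1) (M+1) :=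
      harec (M+1) (j+1+1) (by omega) (by omega)
    have hidx : j + 1 + 1 - 1 = j + 1 := by omega
    rw [hidx] at h
    have hc : a (j+1+1) (M+2) = a (j+1) (M+1) + (2*((M:ℝ)+1) - (((j:ℕ)+1+1:ℕ):ℝ)) * a (j+1+1) (M+1) := by
      push_cast at h ⊢
      linarith [h]
    rw [hc, map_add, map_mul]
    ring
  rw [Finset.sum_congr rfl hmid, Finset.sum_add_distrib, hwtop, hw1]
  ring

lemma combineC (c α β γ δ : ℝ) (W1 W2 : PowerSeries ℝ)
    (h1 : α * c + c * β = 0) (h2 : c * γ = δ) :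
    PowerSeries.C α * (PowerSeries.C c * W1)
      + PowerSeries.C c * (PowerSeries.C β * W1 + PowerSeries.C γ * W2)
      = PowerSeries.C δ * W2 := by
  have ha : PowerSeries.C α * PowerSeries.C c + PowerSeries.C c * PowerSeries.C β
      = 0 := by
    rw [← map_mul, ← map_mul, ← map_add, h1, map_zero]
  have hb : PowerSeries.C c * PowerSeries.C γ = PowerSeries.C δ := by
    rw [← map_mul, h2]
  calc PowerSeries.C α * (PowerSeries.C c * W1)
      + PowerSeries.C c * (PowerSeries.C β * W1 + PowerSeries.C γ * W2)
      = (PowerSeries.C α * PowerSeries.C c + PowerSeries.C c * PowerSeries.C β) * W1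
        + (PowerSeries.C c * PowerSeries.C γ) * W2 := by ring
    _ = PowerSeries.C δ * W2 := by rw [ha, hb]; ring

open scoped PowerSeries in
lemma key_lemma
    (a : ℕ → ℕ → ℝ)
    (ha11 : a 1 1 = 1)
    (ha1 : ∀ N : ℕ, 1 ≤ N → a 1 (N + 1) = (2 * (N : ℝ) - 1) * a 1 N)
    (hadiag : ∀ N : ℕ, 1 ≤ N → a (N + 1) (N + 1) = a N N)
    (harec : ∀ N i : ℕ, 2 ≤ i → i ≤ N →
      a i (N + 1) = a (i - 1) N + (2 * (N : ℝ) - (i : ℝ)) * a i N)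
    (x : ℝ) :
    ∀ N : ℕ, 1 ≤ N →
      ∑ i ∈ Finset.Icc 1 N, PowerSeries.C (a i N) * ((User x) ^ i * Fd x i)
        = PowerSeries.C ((2:ℝ)^N * (Nat.factorial N : ℝ)) *
            ((User x) ^ (2*N) * ((Dser x)⁻¹) ^ (N+1)) := by
  intro N hN
  induction N, hN using Nat.le_induction with
  | base =>
      rw [show (Finset.Icc 1 1) = {1} from rfl, Finset.sum_singleton, ha11]
      rw [show Fd x 1 = d⁄dX ℝ ((Dser x)⁻¹) from rfl, deriv_F]
      norm_num
      ring
  | succ N hN ih =>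
      obtain ⟨M, rfl⟩ : ∃ M, N = M + 1 := ⟨N - 1, by omega⟩
      have hIcc : ∀ (K : ℕ) (f : ℕ → PowerSeries ℝ),
          ∑ i ∈ Finset.Icc 1 K, f i = ∑ j ∈ Finset.range K, f (j+1) := by
        intro K f
        induction K with
        | zero => simp
        | succ K ihK =>
            rw [Finset.sum_Icc_succ_top (by omega), ihK, Finset.sum_range_succ]
      rw [hIcc] at ih ⊢
      rw [show M + 1 + 1 = M + 2 from rfl]
      rw [reindex a ha1 hadiag harec M (fun i => (User x) ^ i * Fd x i)]
      have hterm : ∀ j ∈ Finset.range (M+1),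
          PowerSeries.C (a (j+1) (M+1)) *
            (PowerSeries.C (2*((M:ℝ)+1) - ((j:ℝ)+1)) * ((User x) ^ (j+1) * Fd x (j+1))
              + ((User x) ^ (j+1+1) * Fd x (j+1+1)))
          = PowerSeries.C (2*((M:ℝ)+1)) * (PowerSeries.C (a (j+1) (M+1)) * ((User x) ^ (j+1) * Fd x (j+1)))
            + User x * (d⁄dX ℝ (PowerSeries.C (a (j+1) (M+1)) * ((User x) ^ (j+1) * Fd x (j+1)))) := by
        intro j hj
        rw [Derivation.leibniz, PowerSeries.derivative_C]
        simp only [smul_eq_mul, mul_zero, add_zero]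
        rw [show User x * (PowerSeries.C (a (j+1) (M+1)) * (d⁄dX ℝ) ((User x) ^ (j+1) * Fd x (j+1)))
            = PowerSeries.C (a (j+1) (M+1)) * (User x * (d⁄dX ℝ) ((User x) ^ (j+1) * Fd x (j+1))) by ring]
        rw [wstep x j]
        have hsub : PowerSeries.C (2*((M:ℝ)+1) - ((j:ℝ)+1))
            = PowerSeries.C (2*((M:ℝ)+1)) + PowerSeries.C (-((j:ℝ)+1)) := by
          rw [← map_add, sub_eq_add_neg]
        rw [hsub]
        ring
      rw [Finset.sum_congr rfl hterm, Finset.sum_add_distrib]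
      rw [← Finset.mul_sum, ← Finset.mul_sum, ← map_sum, ih]
      have h2M : 2 * (M + 1) = (2*M+1) + 1 := by omega
      rw [h2M]
      rw [Derivation.leibniz, PowerSeries.derivative_C]
      simp only [smul_eq_mul, mul_zero, add_zero]
      rw [show User x * (PowerSeries.C ((2:ℝ)^(M+1) * ((Nat.factorial (M+1)) : ℝ)) *
            (d⁄dX ℝ) ((User x) ^ (2*M+1+1) * ((Dser x)⁻¹) ^ (M+1+1)))
          = PowerSeries.C ((2:ℝ)^(M+1) * ((Nat.factorial (M+1)) : ℝ)) *
            (User x * (d⁄dX ℝ) ((User x) ^ (2*M+1+1) * ((Dser x)⁻¹) ^ (M+1+1))) by ring]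
      rw [rstep x (2*M+1) (M+1)]
      simp only [show M+1+1 = M+2 from rfl, show M+1+2 = M+3 from rfl,
        show M+2+1 = M+3 from rfl, show (2*M+1)+1 = 2*M+2 from rfl,
        show (2*M+1)+3 = 2*(M+2) from by omega]
      apply combineC
      · push_cast
        ring
      · rw [Nat.factorial_succ (M+1)]
        push_cast
        ring

theorem stmt6'
    (a : ℕ → ℕ → ℝ)
    (ha11 : a 1 1 = 1)
    (ha1 : ∀ N : ℕ, 1 ≤ N → a 1 (N + 1) = (2 * (N : ℝ) - 1) * a 1 N)
    (hadiag : ∀ N : ℕ, 1 ≤ N → a (N + 1) (N + 1) = a N N)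
    (harec : ∀ N i : ℕ, 2 ≤ i → i ≤ N →
      a i (N + 1) = a (i - 1) N + (2 * (N : ℝ) - (i : ℝ)) * a i N)
    (x : ℝ) (hx : x ≠ 0)
    (L : PowerSeries ℝ) (hL0 : PowerSeries.constantCoeff L = 1)
    (hL : L ^ 2 * Dser x = 1)
    (N n : ℕ) (hN : 1 ≤ N) :
    ∑ l ∈ Finset.range (n + 1),
        PowerSeries.coeff l (L ^ (N + 1)) * PowerSeries.coeff (n - l) (L ^ (N + 1)) =
      (1 / (2 ^ N * (Nat.factorial N : ℝ))) *
        ∑ i ∈ Finset.Icc 1 N, a i N *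
          ∑ l ∈ Finset.range (n + 1),
            (Nat.choose (2 * N + n - l - i - 1) (n - l) : ℝ) *
              (PowerSeries.coeff (l + i) ((Dser x)⁻¹ ^ 1)) *
              fallingFactorial ((l : ℝ) + (i : ℝ)) i *
              x ^ ((i : ℤ) + (l : ℤ) - 2 * (N : ℤ) - (n : ℤ)) := by
  have hDne : (Dser x) ≠ 0 := by
    intro h
    have := constCoeff_Dser x
    rw [h] at this
    simp at this
  have hL2 : L ^ 2 = (Dser x)⁻¹ :=
    mul_right_cancel₀ hDne (by rw [hL, Dser_inv_mul])
  -- LHS is coeff n of F^(N+1)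
  have hLHS : ∑ l ∈ Finset.range (n + 1),
      PowerSeries.coeff l (L ^ (N + 1)) * PowerSeries.coeff (n - l) (L ^ (N + 1))
      = PowerSeries.coeff n (((Dser x)⁻¹) ^ (N + 1)) := by
    have h1 := PowerSeries.coeff_mul n (L ^ (N+1)) (L ^ (N+1))
    rw [Finset.Nat.sum_antidiagonal_eq_sum_range_succ_mk] at h1
    rw [← h1]
    have h2 : L ^ (N+1) * L ^ (N+1) = (L ^ 2) ^ (N+1) := by
      rw [← pow_add, ← pow_mul]
      congr 1
      omega
    rw [h2, hL2]
  rw [hLHS]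
  -- key identity multiplied by Vser
  have hkey := key_lemma a ha11 ha1 hadiag harec x N hN
  have hVi : ∀ i ∈ Finset.Icc 1 N, Vser x (2*N) * User x ^ i = Vser x (2*N - i) := by
    intro i hi
    rw [Finset.mem_Icc] at hi
    apply mul_right_cancel₀ (pow_ne_zero (2*N - i) (User_ne_zero x hx))
    rw [mul_assoc, ← pow_add, show i + (2*N - i) = 2*N by omega,
      Vser_mul_pow x hx, Vser_mul_pow x hx]
  have hVk : ∑ i ∈ Finset.Icc 1 N, PowerSeries.C (a i N) * (Vser x (2*N - i) * Fd x i)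
      = PowerSeries.C ((2:ℝ)^N * (Nat.factorial N : ℝ)) * ((Dser x)⁻¹) ^ (N+1) := by
    have h3 : Vser x (2*N) * (∑ i ∈ Finset.Icc 1 N, PowerSeries.C (a i N) * (User x ^ i * Fd x i))
        = Vser x (2*N) * (PowerSeries.C ((2:ℝ)^N * (Nat.factorial N : ℝ)) *
            ((User x) ^ (2*N) * ((Dser x)⁻¹) ^ (N+1))) := by rw [hkey]
    rw [Finset.mul_sum] at h3
    rw [show Vser x (2*N) * (PowerSeries.C ((2:ℝ)^N * (Nat.factorial N : ℝ)) *
          ((User x) ^ (2*N) * ((Dser x)⁻¹) ^ (N+1)))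
        = PowerSeries.C ((2:ℝ)^N * (Nat.factorial N : ℝ)) *
          ((Vser x (2*N) * User x ^ (2*N)) * ((Dser x)⁻¹) ^ (N+1)) by ring,
      Vser_mul_pow x hx, one_mul] at h3
    rw [← h3]
    apply Finset.sum_congr rfl
    intro i hi
    rw [← hVi i hi]
    ring
  -- take coefficient n
  have hco := congrArg (PowerSeries.coeff n) hVk
  rw [map_sum, PowerSeries.coeff_C_mul] at hco
  -- rewrite each summand
  have hterm : ∀ i ∈ Finset.Icc 1 N,
      PowerSeries.coeff n (PowerSeries.C (a i N) * (Vser x (2*N - i) * Fd x i))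
        = a i N * ∑ l ∈ Finset.range (n + 1),
            (Nat.choose (2 * N + n - l - i - 1) (n - l) : ℝ) *
              (PowerSeries.coeff (l + i) ((Dser x)⁻¹ ^ 1)) *
              fallingFactorial ((l : ℝ) + (i : ℝ)) i *
              x ^ ((i : ℤ) + (l : ℤ) - 2 * (N : ℤ) - (n : ℤ)) := by
    intro i hi
    rw [Finset.mem_Icc] at hi
    rw [PowerSeries.coeff_C_mul]
    congr 1
    rw [mul_comm (Vser x (2*N - i)) (Fd x i), PowerSeries.coeff_mul,
      Finset.Nat.sum_antidiagonal_eq_sum_range_succ_mk]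
    apply Finset.sum_congr rfl
    intro l hl
    rw [Finset.mem_range] at hl
    rw [coeff_Fd, show Vser x (2*N - i) = Vser x (2*N - i) from rfl]
    rw [Vser, PowerSeries.coeff_mk]
    have hch : 2*N - i + (n - l) - 1 = 2 * N + n - l - i - 1 := by omega
    have hpow : x⁻¹ ^ (2*N - i + (n - l)) = x ^ ((i : ℤ) + (l : ℤ) - 2 * (N : ℤ) - (n : ℤ)) := by
      have he : (i : ℤ) + (l : ℤ) - 2 * (N : ℤ) - (n : ℤ) = -(((2*N - i + (n - l) : ℕ)) : ℤ) := by
        push_cast [Nat.cast_sub (show i ≤ 2*N by omega), Nat.cast_sub (show l ≤ n by omega)]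
        ring
      rw [he, zpow_neg, zpow_natCast, ← inv_pow]
    rw [hch, hpow, pow_one]
    ring
  rw [Finset.sum_congr rfl hterm] at hco
  rw [hco]
  have hc0 : ((2:ℝ)^N * (Nat.factorial N : ℝ)) ≠ 0 := by
    positivity
  field_simp
  

/-- for `N ≥ 1`, `n ≥ 0` and real `x ≠ 0`,
`Σ_{l=0}^n p_l^{(N+1)}(x) p_{n-l}^{(N+1)}(x) = (1/(2^N N!)) Σ_{i=1}^N a(i,N)
  Σ_{l=0}^n C(2N+n-l-i-1, n-l) U_{l+i}(x) (l+i)_i x^{i+l-2N-n}`,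
where the higher-order Legendre polynomial `p_n^{(α)}(x)` is the `n`-th
coefficient of `L^α` for the unique power series `L` with constant coefficient
`1` and `L² D = 1`, and `a` is the family defined by the recursion
`a(1,1) = 1`, `a(1,N+1) = (2N-1)a(1,N)`, `a(N+1,N+1) = a(N,N)`,
`a(i,N+1) = a(i-1,N) + (2N-i)a(i,N)` for `2 ≤ i ≤ N`. -/
theorem stmt6
    (a : ℕ → ℕ → ℝ)
    (ha11 : a 1 1 = 1)
    (ha1 : ∀ N : ℕ, 1 ≤ N → a 1 (N + 1) = (2 * (N : ℝ) - 1) * a 1 N)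
    (hadiag : ∀ N : ℕ, 1 ≤ N → a (N + 1) (N + 1) = a N N)
    (harec : ∀ N i : ℕ, 2 ≤ i → i ≤ N →
      a i (N + 1) = a (i - 1) N + (2 * (N : ℝ) - (i : ℝ)) * a i N)
    (x : ℝ) (hx : x ≠ 0)
    (L : PowerSeries ℝ) (hL0 : PowerSeries.constantCoeff L = 1)
    (hL : L ^ 2 * Dser x = 1)
    (N n : ℕ) (hN : 1 ≤ N) :
    ∑ l ∈ Finset.range (n + 1),
        PowerSeries.coeff l (L ^ (N + 1)) * PowerSeries.coeff (n - l) (L ^ (N + 1)) =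
      (1 / (2 ^ N * (Nat.factorial N : ℝ))) *
        ∑ i ∈ Finset.Icc 1 N, a i N *
          ∑ l ∈ Finset.range (n + 1),
            (Nat.choose (2 * N + n - l - i - 1) (n - l) : ℝ) *
              chebU x 1 (l + i) *
              fallingFactorial ((l : ℝ) + (i : ℝ)) i *
              x ^ ((i : ℤ) + (l : ℤ) - 2 * (N : ℤ) - (n : ℤ)) := by
  exact stmt6' a ha11 ha1 hadiag harec x hx L hL0 hL N n hN
end

section
/- For every integer N ≥ 1, every integer n ≥ 0, and every real x ≠ 0, Σ_{l=0}^{n} C(N+n-l, n-l) · V_l^{(N+1)}(x) = (1/(2^N · N!)) · Σ_{i=1}^{N} Σ_{l=0}^{i} a(i,N) · (i!/l!) · Σ_{(m,s,p): m+s+p=n} C(2N+m-i-1, m) · C(i-l+s, s) · (p+l)_l · x^{i-2N-m} · V_{p+l}(x), where the inner sum is over all triples (m,s,p) of nonnegative integers with m+s+p = n and x^{i-2N-m} is an integer (possibly negative) power of x. -/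
/-- The higher-order Chebyshev polynomial of the third kind `V_n^{(α)}(x)`,
the `n`-th coefficient of `((1-t)·D⁻¹)^α`. -/
noncomputable def chebV (x : ℝ) (α n : ℕ) : ℝ :=
  PowerSeries.coeff n (((1 - PowerSeries.X) * (Dser x)⁻¹) ^ α)

open PowerSeries Finset

namespace Stmt8Aux

/-- iterated derivative -/
noncomputable def dit : ℕ → ℝ⟦X⟧ → ℝ⟦X⟧
  | 0, φ => φ
  | (i+1), φ => d⁄dX ℝ (dit i φ)

@[simp] lemma dit_zero (φ : ℝ⟦X⟧) : dit 0 φ = φ := rfl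
@[simp] lemma dit_succ (i : ℕ) (φ : ℝ⟦X⟧) : dit (i+1) φ = d⁄dX ℝ (dit i φ) := rfl

lemma dit_add (i : ℕ) (φ ψ : ℝ⟦X⟧) : dit i (φ + ψ) = dit i φ + dit i ψ := by
  induction i with
  | zero => rfl
  | succ i ih => simp [ih]

lemma dit_smul (i : ℕ) (r : ℝ) (φ : ℝ⟦X⟧) : dit i (r • φ) = r • dit i φ := by
  induction i with
  | zero => rfl
  | succ i ih => simp [ih, Derivation.map_smul_of_tower]

lemma dit_sum {α : Type*} (i : ℕ) (s : Finset α) (f : α → ℝ⟦X⟧) :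
    dit i (∑ a ∈ s, f a) = ∑ a ∈ s, dit i (f a) := by
  induction i with
  | zero => rfl
  | succ i ih => simp [ih]

/-- iterated Leibniz rule -/
lemma dit_mul (i : ℕ) (A B : ℝ⟦X⟧) :
    dit i (A * B) = ∑ l ∈ range (i+1), (i.choose l : ℝ) • (dit l A * dit (i-l) B) := by
  induction i with
  | zero => simp
  | succ i ih =>
    rw [dit_succ, ih, map_sum]
    have h1 : ∀ l ∈ range (i+1), d⁄dX ℝ ((i.choose l : ℝ) • (dit l A * dit (i-l) B))
        = (i.choose l : ℝ) • (dit (l+1) A * dit (i-l) B)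
          + (i.choose l : ℝ) • (dit l A * dit (i-l+1) B) := by
      intro l _
      rw [Derivation.map_smul_of_tower, Derivation.leibniz]
      simp only [dit_succ, smul_eq_mul, smul_add]
      ring
    rw [Finset.sum_congr rfl h1, Finset.sum_add_distrib]
    -- reindex the first sum
    have h2 : ∑ l ∈ range (i+1), (i.choose l : ℝ) • (dit (l+1) A * dit (i-l) B)
        = ∑ l ∈ range (i+2), (if l = 0 then 0 else (i.choose (l-1) : ℝ)) • (dit l A * dit (i+1-l) B) := by
      rw [Finset.sum_range_succ' (fun l => (if l = 0 then 0 else (i.choose (l-1) : ℝ)) • (dit l A * dit (i+1-l) B))]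
      simp only [Nat.succ_ne_zero, if_false, Nat.add_sub_cancel, if_pos, zero_smul, add_zero, reduceIte]
      apply Finset.sum_congr rfl
      intro l _
      simp only [Nat.succ_ne_zero, if_false, Nat.add_sub_cancel, Nat.succ_sub_succ]
    have h3 : ∑ l ∈ range (i+1), (i.choose l : ℝ) • (dit l A * dit (i-l+1) B)
        = ∑ l ∈ range (i+2), (if l = i+1 then 0 else (i.choose l : ℝ)) • (dit l A * dit (i+1-l) B) := by
      symm
      rw [Finset.sum_range_succ, if_pos rfl, zero_smul, add_zero]
      apply Finset.sum_congr rfl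
      intro l hl
      simp only [Finset.mem_range] at hl
      rw [if_neg (by omega)]
      have h4 : i - l + 1 = i + 1 - l := by omega
      rw [h4]
    rw [h2, h3, ← Finset.sum_add_distrib]
    apply Finset.sum_congr rfl
    intro l hl
    simp only [Finset.mem_range] at hl
    rw [← add_smul]
    congr 1
    by_cases h0 : l = 0
    · subst h0; simp
    · by_cases hi : l = i + 1
      · subst hi; simp [Nat.choose_succ_self]
      · rw [if_neg h0, if_neg hi]
        obtain ⟨l', rfl⟩ : ∃ l', l = l' + 1 := ⟨l - 1, by omega⟩
        rw [Nat.choose_succ_succ]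
        push_cast
        ring


lemma constCoeff_sub (y : ℝ) : constantCoeff (C y - X) = y := by
  simp

lemma inv_geom_base (y : ℝ) (hy : y ≠ 0) :
    (C y - X)⁻¹ = PowerSeries.mk (fun m => (y⁻¹)^(m+1)) := by
  symm
  rw [PowerSeries.eq_inv_iff_mul_eq_one (by rw [constCoeff_sub]; exact hy)]
  ext n
  rw [mul_comm, sub_mul, map_sub, PowerSeries.coeff_C_mul, PowerSeries.coeff_mk]
  cases n with
  | zero =>
    simp [hy]
  | succ n =>
    rw [PowerSeries.coeff_succ_X_mul, PowerSeries.coeff_mk, PowerSeries.coeff_one]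
    rw [if_neg (by omega)]
    field_simp
    rw [pow_succ (1 / y) (n + 1), mul_comm ((1 / y) ^ (n + 1)), ← mul_assoc, one_div,
      mul_inv_cancel₀ hy, one_mul, sub_self]

lemma inv_geom_pow (y : ℝ) (hy : y ≠ 0) (k : ℕ) :
    ((C y - X)⁻¹)^(k+1) = PowerSeries.mk (fun m => (Nat.choose (k+m) m : ℝ) * (y⁻¹)^(k+1+m)) := by
  induction k with
  | zero =>
    rw [pow_one, inv_geom_base y hy]
    ext n
    simp [add_comm 1 n]
  | succ k ih =>
    rw [pow_succ, ih, inv_geom_base y hy]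
    ext n
    rw [PowerSeries.coeff_mul, Finset.Nat.sum_antidiagonal_eq_sum_range_succ
      (fun a b => (coeff a) (PowerSeries.mk fun m => (Nat.choose (k+m) m : ℝ) * y⁻¹ ^ (k+1+m)) *
        (coeff b) (PowerSeries.mk fun m => y⁻¹ ^ (m+1))), PowerSeries.coeff_mk]
    simp only [PowerSeries.coeff_mk]
    have h1 : ∀ j ∈ range (n+1), (Nat.choose (k+j) j : ℝ) * y⁻¹ ^ (k+1+j) * y⁻¹ ^ (n-j+1)
        = (Nat.choose (j+k) k : ℝ) * y⁻¹ ^ (k+2+n) := by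
      intro j hj
      simp only [Finset.mem_range] at hj
      rw [mul_assoc, ← pow_add]
      congr 1
      · norm_cast
        rw [show k+j = j+k from Nat.add_comm k j, Nat.choose_symm_add]
      · congr 1
        omega
    rw [Finset.sum_congr rfl h1, ← Finset.sum_mul, ← Nat.cast_sum, Nat.sum_range_add_choose n k]
    congr 1
    norm_cast
    rw [show n+k+1 = k+1+n from by omega, Nat.choose_symm_add]


section X
variable (x : ℝ)

noncomputable def uu : ℝ⟦X⟧ := C x - X
noncomputable def vv : ℝ⟦X⟧ := (uu x)⁻¹
noncomputable def gg : ℝ⟦X⟧ := (Dser x)⁻¹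
noncomputable def ww : ℝ⟦X⟧ := (1 - X : ℝ⟦X⟧)⁻¹
noncomputable def ff : ℝ⟦X⟧ := (1 - X) * gg x

lemma constCoeff_D : constantCoeff (Dser x) = 1 := by simp [Dser]

lemma hDg : Dser x * gg x = 1 :=
  PowerSeries.mul_inv_cancel _ (by rw [constCoeff_D]; norm_num)

lemma huv (hx : x ≠ 0) : uu x * vv x = 1 :=
  PowerSeries.mul_inv_cancel _ (by rw [uu, constCoeff_sub]; exact hx)

lemma hw1 : (1 - X : ℝ⟦X⟧) * ww = 1 :=
  PowerSeries.mul_inv_cancel _ (by simp)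

lemma hwf : ww * ff x = gg x := by
  rw [ff, ← mul_assoc, mul_comm ww, hw1, one_mul]

lemma dD : d⁄dX ℝ (Dser x) = (2 : ℝ⟦X⟧) * (X - C x) := by
  have h : (Dser x) = 1 - C (2*x) * X + X^2 := rfl
  rw [h, map_add, map_sub, Derivation.map_one_eq_zero, Derivation.leibniz,
    Derivation.leibniz_pow, derivative_X, derivative_C]
  have h2 : C (2*x) = 2 * C x := by rw [map_mul, map_ofNat]
  rw [h2]
  simp only [smul_eq_mul, nsmul_eq_mul]
  push_cast
  ring

lemma dg : d⁄dX ℝ (gg x) = 2 * (uu x * gg x ^ 2) := by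
  rw [gg, derivative_inv', dD, ← gg, uu]
  ring

lemma du : d⁄dX ℝ (uu x) = -1 := by
  rw [uu, map_sub, derivative_C, derivative_X, zero_sub]

lemma dv : d⁄dX ℝ (vv x) = vv x ^ 2 := by
  rw [vv, derivative_inv', du, mul_neg_one, neg_neg]

lemma dvpow (k : ℕ) : d⁄dX ℝ (vv x ^ (k+1)) = ((k:ℝ)+1) • vv x ^ (k+2) := by
  rw [Derivation.leibniz_pow, dv, Nat.add_sub_cancel, ← Nat.cast_smul_eq_nsmul ℝ,
    smul_eq_mul]
  rw [← pow_add]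
  push_cast
  rfl

lemma dw : d⁄dX ℝ ww = ww ^ 2 := by
  rw [ww, derivative_inv', map_sub, Derivation.map_one_eq_zero, derivative_X, zero_sub,
    mul_neg_one, neg_neg]

lemma dwpow (k : ℕ) : d⁄dX ℝ (ww ^ (k+1)) = ((k:ℝ)+1) • ww ^ (k+2) := by
  rw [Derivation.leibniz_pow, dw, Nat.add_sub_cancel, ← Nat.cast_smul_eq_nsmul ℝ,
    smul_eq_mul]
  rw [← pow_add]
  push_cast
  rfl

lemma dit_w (j : ℕ) : dit j ww = (j.factorial : ℝ) • ww ^ (j+1) := by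
  induction j with
  | zero => simp
  | succ j ih =>
    rw [dit_succ, ih, Derivation.map_smul_of_tower, dwpow, smul_smul]
    congr 1
    rw [Nat.factorial_succ]
    push_cast
    ring


lemma smul_C (r : ℝ) (φ : ℝ⟦X⟧) : r • φ = C r * φ := by
  ext n
  rw [PowerSeries.coeff_C_mul]
  exact (coeff n).map_smul r φ

lemma star (hx : x ≠ 0)
    (a : ℕ → ℕ → ℝ)
    (ha11 : a 1 1 = 1)
    (ha1 : ∀ N : ℕ, 1 ≤ N → a 1 (N + 1) = (2 * (N : ℝ) - 1) * a 1 N)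
    (hadiag : ∀ N : ℕ, 1 ≤ N → a (N + 1) (N + 1) = a N N)
    (harec : ∀ N i : ℕ, 2 ≤ i → i ≤ N →
      a i (N + 1) = a (i - 1) N + (2 * (N : ℝ) - (i : ℝ)) * a i N) :
    ∀ N : ℕ, 1 ≤ N → ((2:ℝ)^N * N.factorial) • gg x ^ (N+1) =
      ∑ i ∈ Icc 1 N, a i N • (vv x ^ (2*N - i) * dit i (gg x)) := by
  have hins : ∀ M : ℕ, 1 ≤ M → (Icc 1 M) = insert 1 (Icc 2 M) := by
    intro M hM; ext j; simp only [Finset.mem_Icc, Finset.mem_insert]; omega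
  have hnotin : ∀ M : ℕ, (1 : ℕ) ∉ Icc 2 M := by
    intro M; simp
  intro N hN
  induction N, hN using Nat.le_induction with
  | base =>
    rw [show Icc 1 1 = {1} from rfl, Finset.sum_singleton, ha11, one_smul]
    rw [show 2*1-1 = 1 from rfl, dit_succ, dit_zero, dg, pow_one, pow_one,
      show vv x * (2 * (uu x * gg x ^ 2)) = 2 * (uu x * vv x) * gg x ^ 2 by ring, huv x hx,
      smul_C]
    norm_num
    exact Or.inl (map_ofNat (C (R := ℝ)) 2)
  | succ N hN ih =>
    have key := congrArg (fun φ => vv x * d⁄dX ℝ φ) ih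
    have hdgpow : d⁄dX ℝ (gg x ^ (N+1)) = ((N:ℝ)+1) • (gg x ^ N * (2 * (uu x * gg x ^ 2))) := by
      rw [Derivation.leibniz_pow, dg, Nat.add_sub_cancel, smul_eq_mul,
        ← Nat.cast_smul_eq_nsmul ℝ]
      norm_num
    have hL : vv x * d⁄dX ℝ (((2:ℝ)^N * N.factorial) • gg x ^ (N+1))
        = ((2:ℝ)^(N+1) * (N+1).factorial) • gg x ^ (N+2) := by
      rw [Derivation.map_smul_of_tower, hdgpow, smul_C, smul_C, smul_C]
      rw [show vv x * (C ((2:ℝ)^N * N.factorial) * (C ((N:ℝ)+1) * (gg x ^ N * (2 * (uu x * gg x ^ 2)))))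
          = (C ((2:ℝ)^N * N.factorial) * C ((N:ℝ)+1) * 2) * (uu x * vv x) * gg x ^ (N+2) by ring,
        huv x hx, mul_one, ← map_ofNat (C (R := ℝ)) 2, ← map_mul, ← map_mul]
      congr 2
      rw [Nat.factorial_succ]
      push_cast
      ring
    have step1 : ∀ i ∈ Icc 1 N, vv x * d⁄dX ℝ (a i N • (vv x ^ (2*N-i) * dit i (gg x)))
        = ((2*(N:ℝ) - i) * a i N) • (vv x ^ (2*(N+1)-i) * dit i (gg x))
          + a i N • (vv x ^ (2*(N+1)-(i+1)) * dit (i+1) (gg x)) := by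
      intro i hi
      simp only [Finset.mem_Icc] at hi
      obtain ⟨k, hk⟩ : ∃ k, 2*N - i = k + 1 := ⟨2*N-i-1, by omega⟩
      have hcast : 2*(N:ℝ) - i = (k:ℝ) + 1 := by
        have h' : ((2*N - i : ℕ) : ℝ) = (k:ℝ) + 1 := by rw [hk]; push_cast; ring
        rw [Nat.cast_sub (by omega)] at h'
        push_cast at h' ⊢
        linarith
      rw [Derivation.map_smul_of_tower, Derivation.leibniz, hk, dvpow,
        show 2*(N+1)-i = k+3 by omega, show 2*(N+1)-(i+1) = k+2 by omega, hcast,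
        ← dit_succ]
      simp only [smul_C, smul_eq_mul, map_mul, map_add]
      ring
    rw [hL, map_sum, Finset.mul_sum, Finset.sum_congr rfl step1, Finset.sum_add_distrib] at key
    have hre : ∑ i ∈ Icc 1 N, a i N • (vv x ^ (2*(N+1)-(i+1)) * dit (i+1) (gg x))
        = ∑ j ∈ Icc 2 (N+1), a (j-1) N • (vv x ^ (2*(N+1)-j) * dit j (gg x)) := by
      rw [show (2 : ℕ) = 1 + 1 from rfl, ← Finset.map_add_right_Icc 1 N 1, Finset.sum_map]
      apply Finset.sum_congr rfl
      intro i _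
      simp only [addRightEmbedding_apply, Nat.add_sub_cancel]
    rw [hre] at key
    rw [key]
    set F : ℕ → ℝ⟦X⟧ := fun j => vv x ^ (2*(N+1)-j) * dit j (gg x) with hF
    have h2N : (2:ℕ) ≤ N + 1 := by omega
    rw [hins N hN, Finset.sum_insert (hnotin _), Finset.sum_Icc_succ_top h2N,
      hins (N+1) (by omega), Finset.sum_insert (hnotin _), Finset.sum_Icc_succ_top h2N]
    have hmid : ∑ j ∈ Icc 2 N, a j (N+1) • F j
        = ∑ j ∈ Icc 2 N, (a (j-1) N • F j + ((2*(N:ℝ) - j) * a j N) • F j) := by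
      apply Finset.sum_congr rfl
      intro j hj
      simp only [Finset.mem_Icc] at hj
      rw [harec N j hj.1 hj.2, add_smul]
    rw [hmid, Finset.sum_add_distrib, ha1 N hN, hadiag N hN]
    simp only [Nat.add_sub_cancel, Nat.cast_one]
    abel


lemma cheb_ff (m : ℕ) : chebV x 1 m = coeff m (ff x) := by
  rw [chebV, pow_one]; rfl

lemma coeff_dit_f (l p : ℕ) :
    coeff p (dit l (ff x)) = fallingFactorial ((p:ℝ)+(l:ℝ)) l * chebV x 1 (p+l) := by
  induction l generalizing p with
  | zero => simp [fallingFactorial, cheb_ff]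
  | succ l ih =>
    rw [dit_succ, coeff_derivative, ih (p+1)]
    have hff : fallingFactorial ((p:ℝ) + ((l+1:ℕ):ℝ)) (l+1)
        = fallingFactorial (((p+1:ℕ):ℝ) + (l:ℝ)) l * ((p:ℝ)+1) := by
      rw [fallingFactorial, Finset.prod_range_succ, ← fallingFactorial]
      push_cast
      rw [show (p:ℝ) + ((l:ℝ)+1) = ((p:ℝ)+1) + (l:ℝ) by ring]
      ring
    rw [hff, show p + 1 + l = p + (l+1) by omega]
    ring

lemma one_sub_X : (1 - X : ℝ⟦X⟧) = C 1 - X := by rw [map_one]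

lemma coeff_w_pow (k m : ℕ) : coeff m (ww ^ (k+1)) = (Nat.choose (k+m) m : ℝ) := by
  rw [ww, one_sub_X, inv_geom_pow 1 one_ne_zero k, PowerSeries.coeff_mk]
  norm_num

lemma coeff_v_pow (hx : x ≠ 0) (k m : ℕ) :
    coeff m (vv x ^ (k+1)) = (Nat.choose (k+m) m : ℝ) * (x⁻¹) ^ (k+1+m) := by
  rw [vv, uu, inv_geom_pow x hx k, PowerSeries.coeff_mk]

lemma lhs_eq (N n : ℕ) :
    ∑ l ∈ Finset.range (n + 1), (Nat.choose (N + n - l) (n - l) : ℝ) * chebV x (N + 1) l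
      = coeff n (gg x ^ (N+1)) := by
  have h1 : gg x ^ (N+1) = ff x ^ (N+1) * ww ^ (N+1) := by
    rw [← mul_pow, mul_comm (ff x), hwf]
  have h2 : ∀ l : ℕ, chebV x (N+1) l = coeff l (ff x ^ (N+1)) := fun l => rfl
  rw [h1, PowerSeries.coeff_mul, Finset.Nat.sum_antidiagonal_eq_sum_range_succ
    (fun a b => coeff a (ff x ^ (N+1)) * coeff b (ww ^ (N+1)))]
  apply Finset.sum_congr rfl
  intro l hl
  simp only [Finset.mem_range] at hl
  rw [h2, coeff_w_pow, show N + (n - l) = N + n - l by omega, mul_comm]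

lemma inner_eq (hx : x ≠ 0) (N n i l : ℕ) (h1i : 1 ≤ i) (hiN : i ≤ N) (hN : 1 ≤ N) :
    coeff n (vv x ^ (2*N-i) * (ww ^ (i-l+1) * dit l (ff x)))
      = ∑ m ∈ Finset.range (n+1), ∑ s ∈ Finset.range (n+1-m),
          (Nat.choose (2*N+m-i-1) m : ℝ) * (Nat.choose (i-l+s) s : ℝ)
            * fallingFactorial (((n-m-s : ℕ):ℝ) + (l:ℝ)) l
            * x ^ ((i:ℤ) - 2*(N:ℤ) - (m:ℤ)) * chebV x 1 ((n-m-s)+l) := by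
  obtain ⟨k, hk⟩ : ∃ k, 2*N - i = k + 1 := ⟨2*N-i-1, by omega⟩
  rw [hk, PowerSeries.coeff_mul, Finset.Nat.sum_antidiagonal_eq_sum_range_succ
    (fun a b => coeff a (vv x ^ (k+1)) * coeff b (ww ^ (i-l+1) * dit l (ff x)))]
  apply Finset.sum_congr rfl
  intro m hm
  simp only [Finset.mem_range] at hm
  rw [PowerSeries.coeff_mul, Finset.Nat.sum_antidiagonal_eq_sum_range_succ
    (fun a b => coeff a (ww ^ (i-l+1)) * coeff b (dit l (ff x))),
    show (n - m).succ = n + 1 - m by omega, Finset.mul_sum]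
  apply Finset.sum_congr rfl
  intro s hs
  simp only [Finset.mem_range] at hs
  rw [coeff_v_pow x hx, coeff_w_pow, coeff_dit_f, show i - l + s = i-l+s from rfl]
  have hxpow : (x⁻¹) ^ (k+1+m) = x ^ ((i:ℤ) - 2*(N:ℤ) - (m:ℤ)) := by
    rw [show (i:ℤ) - 2*(N:ℤ) - (m:ℤ) = -((k+1+m : ℕ) : ℤ) by push_cast; omega,
      zpow_neg, zpow_natCast, inv_pow]
  have hch : k + m = 2*N+m-i-1 := by omega
  have hnms : n - m - s = n - m - s := rfl
  rw [hxpow, hch]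
  ring

lemma dit_g (i : ℕ) : dit i (gg x)
    = ∑ l ∈ range (i+1), ((i.factorial : ℝ)/(l.factorial : ℝ)) • (ww ^ (i-l+1) * dit l (ff x)) := by
  rw [← hwf, mul_comm ww (ff x), dit_mul]
  apply Finset.sum_congr rfl
  intro l hl
  simp only [Finset.mem_range] at hl
  rw [dit_w]
  rw [smul_C, smul_C, smul_C]
  rw [show C (i.choose l : ℝ) * (dit l (ff x) * (C ((i-l).factorial : ℝ) * ww ^ (i-l+1)))
      = (C (i.choose l : ℝ) * C ((i-l).factorial : ℝ)) * (ww ^ (i-l+1) * dit l (ff x)) by ring,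
    ← map_mul]
  congr 2
  have hfac := Nat.choose_mul_factorial_mul_factorial (show l ≤ i by omega)
  have hl0 : (l.factorial : ℝ) ≠ 0 := Nat.cast_ne_zero.mpr (Nat.factorial_ne_zero l)
  field_simp
  rw [← Nat.cast_mul, ← Nat.cast_mul, ← hfac]
  push_cast
  ring

end X
end Stmt8Aux

/-- for `N ≥ 1`, `n ≥ 0` and real `x ≠ 0`,
`Σ_{l=0}^n C(N+n-l, n-l) V_l^{(N+1)}(x) = (1/(2^N N!)) Σ_{i=1}^N Σ_{l=0}^i
  a(i,N) (i!/l!) Σ_{m+s+p=n} C(2N+m-i-1, m) C(i-l+s, s) (p+l)_l x^{i-2N-m}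
  V_{p+l}(x)`, where the inner sum over triples `(m,s,p)` of nonnegative
integers with `m+s+p = n` is realized as a double sum over `m ≤ n`,
`s ≤ n - m` with `p = n - m - s`, and `a` is the family defined by the
recursion `a(1,1) = 1`, `a(1,N+1) = (2N-1)a(1,N)`, `a(N+1,N+1) = a(N,N)`,
`a(i,N+1) = a(i-1,N) + (2N-i)a(i,N)` for `2 ≤ i ≤ N`. -/
theorem stmt8
    (a : ℕ → ℕ → ℝ)
    (ha11 : a 1 1 = 1)
    (ha1 : ∀ N : ℕ, 1 ≤ N → a 1 (N + 1) = (2 * (N : ℝ) - 1) * a 1 N)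
    (hadiag : ∀ N : ℕ, 1 ≤ N → a (N + 1) (N + 1) = a N N)
    (harec : ∀ N i : ℕ, 2 ≤ i → i ≤ N →
      a i (N + 1) = a (i - 1) N + (2 * (N : ℝ) - (i : ℝ)) * a i N)
    (x : ℝ) (hx : x ≠ 0) (N n : ℕ) (hN : 1 ≤ N) :
    ∑ l ∈ Finset.range (n + 1), (Nat.choose (N + n - l) (n - l) : ℝ) * chebV x (N + 1) l =
      (1 / (2 ^ N * (Nat.factorial N : ℝ))) *
        ∑ i ∈ Finset.Icc 1 N, ∑ l ∈ Finset.range (i + 1),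
          a i N * ((Nat.factorial i : ℝ) / (Nat.factorial l : ℝ)) *
            ∑ m ∈ Finset.range (n + 1), ∑ s ∈ Finset.range (n + 1 - m),
              (Nat.choose (2 * N + m - i - 1) m : ℝ) *
                (Nat.choose (i - l + s) s : ℝ) *
                fallingFactorial (((n - m - s : ℕ) : ℝ) + (l : ℝ)) l *
                x ^ ((i : ℤ) - 2 * (N : ℤ) - (m : ℤ)) *
                chebV x 1 ((n - m - s) + l) := by
  classical
  have h2N0 : ((2:ℝ)^N * (N.factorial : ℝ)) ≠ 0 := by positivity
  rw [Stmt8Aux.lhs_eq]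
  have hstar := Stmt8Aux.star x hx a ha11 ha1 hadiag harec N hN
  have hco := congrArg (PowerSeries.coeff n) hstar
  rw [(PowerSeries.coeff n).map_smul, map_sum] at hco
  have hterm : ∀ i ∈ Finset.Icc 1 N,
      PowerSeries.coeff n (a i N • (Stmt8Aux.vv x ^ (2*N-i) * Stmt8Aux.dit i (Stmt8Aux.gg x)))
      = ∑ l ∈ Finset.range (i + 1),
          a i N * ((Nat.factorial i : ℝ) / (Nat.factorial l : ℝ)) *
            ∑ m ∈ Finset.range (n + 1), ∑ s ∈ Finset.range (n + 1 - m),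
              (Nat.choose (2 * N + m - i - 1) m : ℝ) *
                (Nat.choose (i - l + s) s : ℝ) *
                fallingFactorial (((n - m - s : ℕ) : ℝ) + (l : ℝ)) l *
                x ^ ((i : ℤ) - 2 * (N : ℤ) - (m : ℤ)) *
                chebV x 1 ((n - m - s) + l) := by
    intro i hi
    simp only [Finset.mem_Icc] at hi
    rw [(PowerSeries.coeff n).map_smul, Stmt8Aux.dit_g, Finset.mul_sum, map_sum,
      Finset.smul_sum]
    apply Finset.sum_congr rfl
    intro l hl
    rw [mul_smul_comm, (PowerSeries.coeff n).map_smul,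
      Stmt8Aux.inner_eq x hx N n i l hi.1 hi.2 hN]
    rw [smul_eq_mul, smul_eq_mul]
    ring
  rw [Finset.sum_congr rfl hterm] at hco
  rw [smul_eq_mul] at hco
  rw [← hco, one_div, inv_mul_cancel_left₀ h2N0]
end

section
/- For every integer N ≥ 1, every integer n ≥ 0, and every real x ≠ 0, Σ_{l=0}^{n} (-1)^{n-l} · C(N+n-l, n-l) · W_l^{(N+1)}(x) = (1/(2^N · N!)) · Σ_{i=1}^{N} Σ_{l=0}^{i} (-1)^{i-l} · a(i,N) · (i!/l!) · Σ_{(m,s,p): m+s+p=n} (-1)^s · C(2N+m-i-1, m) · C(i-l+s, s) · (p+l)_l · x^{i-2N-m} · W_{p+l}(x), where the inner sum is over all triples (m,s,p) of nonnegative integers with m+s+p = n and x^{i-2N-m} is an integer (possibly negative) power of x. -/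
/-- The higher-order Chebyshev polynomial of the fourth kind `W_n^{(α)}(x)`,
the `n`-th coefficient of `((1+t)·D⁻¹)^α`. -/
noncomputable def chebW (x : ℝ) (α n : ℕ) : ℝ :=
  PowerSeries.coeff n (((1 + PowerSeries.X) * (Dser x)⁻¹) ^ α)

open PowerSeries Finset

private noncomputable def dps : ℝ⟦X⟧ → ℝ⟦X⟧ := fun f => d⁄dX ℝ f

lemma dps_mul (p q : ℝ⟦X⟧) : dps (p * q) = p * dps q + q * dps p := by
  simp [dps, Derivation.leibniz, smul_eq_mul]

lemma dps_sum {s : Finset ℕ} (f : ℕ → ℝ⟦X⟧) : dps (∑ k ∈ s, f k) = ∑ k ∈ s, dps (f k) := by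
  simp [dps]

lemma dps_C (c : ℝ) : dps (C c) = 0 := by simp [dps]

lemma dps_C_mul (c : ℝ) (h : ℝ⟦X⟧) : dps (C c * h) = C c * dps h := by
  rw [dps_mul, dps_C]; ring

lemma dps_pow (h : ℝ⟦X⟧) (k : ℕ) :
    dps (h ^ (k + 1)) = C ((k : ℝ) + 1) * h ^ k * dps h := by
  have hdef : ∀ f : ℝ⟦X⟧, dps f = d⁄dX ℝ f := fun f => rfl
  rw [hdef, Derivation.leibniz_pow, ← hdef]
  have hc : (C) ((k : ℝ) + 1) = ((k + 1 : ℕ) : ℝ⟦X⟧) := by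
    rw [← map_natCast (C) (k + 1)]
    push_cast
    ring
  rw [hc]
  simp only [smul_eq_mul, nsmul_eq_mul, Nat.add_sub_cancel]
  ring

lemma hdg (x : ℝ) : dps (Dser x)⁻¹ = C 2 * (C x - X) * ((Dser x)⁻¹) ^ 2 := by
  show d⁄dX ℝ _ = _
  rw [derivative_inv']
  have hdD : d⁄dX ℝ (Dser x) = -(C 2 * (C x - X)) := by
    have d2 : (d⁄dX ℝ) (2 : ℝ⟦X⟧) = 0 := by rw [← map_ofNat (C) 2, derivative_C]
    simp only [Dser, map_add, map_sub, Derivation.leibniz, derivative_X, derivative_C,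
      Derivation.leibniz_pow, smul_eq_mul, Derivation.map_one_eq_zero, map_mul, map_ofNat, d2]
    ring_nf
  rw [hdD]
  ring

lemma dps_u (x : ℝ) : dps (C x - X) = -1 := by
  simp [dps]

theorem keyA (a : ℕ → ℕ → ℝ)
    (ha11 : a 1 1 = 1)
    (ha1 : ∀ N : ℕ, 1 ≤ N → a 1 (N + 1) = (2 * (N : ℝ) - 1) * a 1 N)
    (hadiag : ∀ N : ℕ, 1 ≤ N → a (N + 1) (N + 1) = a N N)
    (harec : ∀ N i : ℕ, 2 ≤ i → i ≤ N →
      a i (N + 1) = a (i - 1) N + (2 * (N : ℝ) - (i : ℝ)) * a i N)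
    (x : ℝ) (N₀ : ℕ) (hN₀ : 1 ≤ N₀) :
    ∑ j ∈ range N₀, C (a (j + 1) N₀) * ((C x - X) ^ (j + 1) * dps^[j + 1] (Dser x)⁻¹) =
      C (2 ^ N₀ * (Nat.factorial N₀ : ℝ)) *
        ((C x - X) ^ (2 * N₀) * ((Dser x)⁻¹) ^ (N₀ + 1)) := by
  set u : ℝ⟦X⟧ := C x - X with hu
  set g : ℝ⟦X⟧ := (Dser x)⁻¹ with hg
  induction N₀, hN₀ using Nat.le_induction with
  | base =>
      simp only [range_one, sum_singleton, ha11, map_one, one_mul]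
      rw [Function.iterate_one, show dps g = C 2 * u * g ^ 2 from hdg x]
      have h1 : (C) (2 ^ 1 * ((Nat.factorial 1 : ℕ) : ℝ)) = C 2 := by norm_num
      rw [h1]
      ring
  | succ N hN ih =>
      have hop : ∀ j : ℕ,
          u * dps (u ^ (j + 1) * dps^[j + 1] g)
            + C (2 * (N : ℝ)) * (u ^ (j + 1) * dps^[j + 1] g)
          = C (2 * (N : ℝ) - ((j : ℝ) + 1)) * (u ^ (j + 1) * dps^[j + 1] g)
            + u ^ (j + 2) * dps^[j + 2] g := by
        intro j
        rw [dps_mul, dps_pow u j, dps_u x,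
          show dps^[j + 2] g = dps (dps^[j + 1] g) from Function.iterate_succ_apply' dps (j+1) g,
          map_sub]
        have hcj : (C) ((j : ℝ) + 1) * u ^ j * (-1 : ℝ⟦X⟧)
            = -((C) ((j : ℝ) + 1) * u ^ j) := by ring
        generalize dps^[j + 1] g = h
        ring
      -- apply the operator to the sum
      have hrhs1 : u * dps (∑ j ∈ range N, C (a (j + 1) N) * (u ^ (j + 1) * dps^[j + 1] g))
          + C (2 * (N : ℝ)) * ∑ j ∈ range N, C (a (j + 1) N) * (u ^ (j + 1) * dps^[j + 1] g)
          = ∑ j ∈ range N, C (a (j + 1) N) *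
              (C (2 * (N : ℝ) - ((j : ℝ) + 1)) * (u ^ (j + 1) * dps^[j + 1] g)
                + u ^ (j + 2) * dps^[j + 2] g) := by
        rw [dps_sum, mul_sum, mul_sum, ← sum_add_distrib]
        refine sum_congr rfl fun j hj => ?_
        rw [dps_C_mul]
        calc u * (C (a (j + 1) N) * dps (u ^ (j + 1) * dps^[j + 1] g))
              + C (2 * (N : ℝ)) * (C (a (j + 1) N) * (u ^ (j + 1) * dps^[j + 1] g))
            = C (a (j + 1) N) * (u * dps (u ^ (j + 1) * dps^[j + 1] g)
                + C (2 * (N : ℝ)) * (u ^ (j + 1) * dps^[j + 1] g)) := by ring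
          _ = _ := by rw [hop j]
      -- decompose the (N+1)-coefficients
      have claim1 : ∑ j ∈ range (N + 1), C (a (j + 1) (N + 1)) * (u ^ (j + 1) * dps^[j + 1] g)
          = ∑ j ∈ range N, C (a (j + 1) N) *
              (C (2 * (N : ℝ) - ((j : ℝ) + 1)) * (u ^ (j + 1) * dps^[j + 1] g)
                + u ^ (j + 2) * dps^[j + 2] g) := by
        have hdec : ∀ j ∈ range (N + 1), C (a (j + 1) (N + 1)) * (u ^ (j + 1) * dps^[j + 1] g)
            = C ((if j = N then 0 else (2 * (N : ℝ) - ((j : ℝ) + 1)) * a (j + 1) N))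
                * (u ^ (j + 1) * dps^[j + 1] g)
              + C ((if j = 0 then 0 else a j N)) * (u ^ (j + 1) * dps^[j + 1] g) := by
          intro j hj
          rw [mem_range] at hj
          rw [← add_mul, ← map_add]
          congr 2
          rcases Nat.eq_or_lt_of_le (Nat.lt_succ_iff.mp hj) with hjN | hjN
          · rw [if_pos hjN, hjN, if_neg (by omega), hadiag N hN, zero_add]
          · rcases Nat.eq_zero_or_pos j with hj0 | hj0
            · subst hj0
              rw [if_neg (by omega), if_pos rfl, ha1 N hN]
              push_cast
              ring
            · rw [if_neg (by omega), if_neg (by omega),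
                harec N (j + 1) (by omega) (by omega)]
              simp only [Nat.add_sub_cancel]
              push_cast
              ring
        rw [sum_congr rfl hdec, sum_add_distrib]
        have hR : ∀ j ∈ range N, C (a (j + 1) N) *
              (C (2 * (N : ℝ) - ((j : ℝ) + 1)) * (u ^ (j + 1) * dps^[j + 1] g)
                + u ^ (j + 2) * dps^[j + 2] g)
            = C (a (j + 1) N) * (C (2 * (N : ℝ) - ((j : ℝ) + 1)) * (u ^ (j + 1) * dps^[j + 1] g))
              + C (a (j + 1) N) * (u ^ (j + 2) * dps^[j + 2] g) := fun j hj => by ring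
        rw [sum_congr rfl hR, sum_add_distrib]
        congr 1
        · -- first part: drop last (zero) term
          rw [sum_range_succ, if_pos rfl, map_zero, zero_mul, add_zero]
          refine sum_congr rfl fun j hj => ?_
          rw [mem_range] at hj
          rw [if_neg (by omega)]
          rw [map_mul]
          ring
        · -- second part: drop first (zero) term, shift index
          rw [sum_range_succ', if_pos rfl, map_zero, zero_mul, add_zero]
          refine sum_congr rfl fun j hj => ?_
          rw [if_neg (by omega)]
      -- transform the closed form
      obtain ⟨M, hM⟩ : ∃ M, 2 * N = M + 1 := ⟨2 * N - 1, by omega⟩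
      have claim2 : u * dps (C (2 ^ N * (Nat.factorial N : ℝ)) * (u ^ (2 * N) * g ^ (N + 1)))
          + C (2 * (N : ℝ)) * (C (2 ^ N * (Nat.factorial N : ℝ)) * (u ^ (2 * N) * g ^ (N + 1)))
          = C (2 ^ (N + 1) * (Nat.factorial (N + 1) : ℝ)) *
              (u ^ (2 * (N + 1)) * g ^ (N + 1 + 1)) := by
        rw [dps_C_mul, dps_mul, hM, dps_pow u M, dps_pow g N, dps_u x,
          show dps g = C 2 * u * g ^ 2 from hdg x]
        have hsc : (C) (2 ^ (N + 1) * (Nat.factorial (N + 1) : ℝ))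
            = C (2 ^ N * (Nat.factorial N : ℝ)) * C (2 * ((N : ℝ) + 1)) := by
          rw [← map_mul]
          congr 1
          rw [Nat.factorial_succ]
          push_cast
          ring
        have hMc : (C) ((M : ℝ) + 1) = C (2 * (N : ℝ)) := by
          congr 1
          have : (M : ℝ) = 2 * (N : ℝ) - 1 := by
            have : (M : ℝ) + 1 = 2 * (N : ℝ) := by exact_mod_cast congrArg (Nat.cast : ℕ → ℝ) hM.symm
            linarith
          rw [this]; ring
        rw [hsc, hMc, show 2 * (N + 1) = M + 3 from by omega]
        have h2 : (C) (2 * (N : ℝ) + 2) = C ((N : ℝ) + 1) * C 2 := by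
          rw [← map_mul]; congr 1; ring
        ring_nf
        rw [show (C) (2 + (N : ℝ) * 2) = C (1 + (N : ℝ)) * C 2 from by
          rw [← map_mul]; congr 1; ring]
        ring
      rw [claim1, ← hrhs1, ih, claim2]


/-- series `Σ_m C(k+m,m) r^m t^m`, the inverse of `(1 - r t)^{k+1}`. -/
private noncomputable def mkG (r : ℝ) (k : ℕ) : ℝ⟦X⟧ :=
  PowerSeries.mk fun m => (((k + m).choose m : ℝ)) * r ^ m

lemma coeff_mkG (r : ℝ) (k m : ℕ) : coeff m (mkG r k) = ((k + m).choose m : ℝ) * r ^ m := by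
  simp [mkG]

lemma geom_step (r : ℝ) (k : ℕ) : (1 - C r * X) * mkG r (k + 1) = mkG r k := by
  have h : (1 - C r * X) * mkG r (k + 1)
      = mkG r (k + 1) - C r * (X * mkG r (k + 1)) := by ring
  rw [h]
  ext m
  rcases m with _ | m
  · simp [mkG]
  · rw [map_sub, coeff_C_mul, coeff_succ_X_mul, coeff_mkG, coeff_mkG, coeff_mkG]
    have h1 : k + 1 + (m + 1) = (k + 1 + m) + 1 := by omega
    rw [h1, Nat.choose_succ_succ (k + 1 + m) m]
    have h2 : k + 1 + m = k + (m + 1) := by omega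
    rw [h2]
    push_cast
    ring
lemma geom_zero (r : ℝ) : (1 - C r * X) * mkG r 0 = 1 := by
  have h : (1 - C r * X) * mkG r 0 = mkG r 0 - C r * (X * mkG r 0) := by ring
  rw [h]
  ext m
  rcases m with _ | m
  · simp [mkG]
  · rw [map_sub, coeff_C_mul, coeff_succ_X_mul, coeff_mkG, coeff_mkG, coeff_one]
    simp only [Nat.zero_add, Nat.choose_self, Nat.cast_one, one_mul, if_neg (Nat.succ_ne_zero m)]
    ring

lemma geom_inv (r : ℝ) (k : ℕ) : (1 - C r * X) ^ (k + 1) * mkG r k = 1 := by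
  induction k with
  | zero => rw [pow_one]; exact geom_zero r
  | succ k ih =>
      calc (1 - C r * X) ^ (k + 2) * mkG r (k + 1)
          = (1 - C r * X) ^ (k + 1) * ((1 - C r * X) * mkG r (k + 1)) := by ring
        _ = 1 := by rw [geom_step]; exact ih


lemma coeff_iter (l : ℕ) (f : ℝ⟦X⟧) (p : ℕ) :
    coeff p (dps^[l] f) = (∏ j ∈ range l, ((p + l - j : ℕ) : ℝ)) * coeff (p + l) f := by
  induction l generalizing f with
  | zero => simp
  | succ l ih =>
      rw [Function.iterate_succ_apply, ih]
      show _ * coeff (p + l) (d⁄dX ℝ f) = _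
      rw [PowerSeries.coeff_derivative]
      rw [prod_range_succ' (fun j => ((p + (l + 1) - j : ℕ) : ℝ)) l]
      have h1 : ∀ j ∈ range l, ((p + (l + 1) - (j + 1) : ℕ) : ℝ) = ((p + l - j : ℕ) : ℝ) := by
        intro j hj; congr 1; omega
      rw [prod_congr rfl h1]
      have h2 : p + (l + 1) - 0 = p + l + 1 := by omega
      rw [h2]
      push_cast
      ring

/-- iterated derivative of `(1+X)⁻¹ = mkG (-1) 0`. -/
lemma dps_iter_mkG (k : ℕ) : dps^[k] (mkG (-1) 0) = C ((-1) ^ k * (Nat.factorial k : ℝ)) * mkG (-1) k := by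
  ext s
  rw [coeff_iter, coeff_C_mul, coeff_mkG, coeff_mkG]
  have hd : (∏ j ∈ range k, ((s + k - j : ℕ) : ℝ)) = (((s + k).descFactorial k : ℕ) : ℝ) := by
    rw [Nat.descFactorial_eq_prod_range]
    push_cast
    rfl
  rw [hd, Nat.descFactorial_eq_factorial_mul_choose]
  have h3 : (s + k).choose k = (k + s).choose s := by
    rw [Nat.add_comm s k]; exact Nat.choose_symm_add
  rw [h3]
  rw [Nat.zero_add, Nat.choose_self]
  push_cast
  rw [show s + k = k + s from by omega, pow_add]
  ring

lemma dps_smul (c : ℕ) (p : ℝ⟦X⟧) : dps (c • p) = c • dps p := by simp [dps]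

theorem iterate_dps_mul {n : ℕ} (p q : ℝ⟦X⟧) :
    dps^[n] (p * q) =
      ∑ k ∈ range n.succ, (n.choose k • (dps^[n - k] p * dps^[k] q)) := by
  induction n with
  | zero =>
    simp [Finset.range]
  | succ n IH =>
    calc
      dps^[n + 1] (p * q) =
          dps (∑ k ∈ range n.succ,
              n.choose k • (dps^[n - k] p * dps^[k] q)) := by
        rw [Function.iterate_succ_apply', IH]
      _ = (∑ k ∈ range n.succ,
            n.choose k • (dps^[n - k + 1] p * dps^[k] q)) +
          ∑ k ∈ range n.succ,
            n.choose k • (dps^[n - k] p * dps^[k + 1] q) := by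
        rw [dps_sum]
        simp_rw [dps_smul, dps_mul, Function.iterate_succ_apply', smul_add, sum_add_distrib]
        rw [add_comm]
        congr 1
        exact sum_congr rfl fun k _ => by rw [mul_comm]
      _ = (∑ k ∈ range n.succ,
                n.choose k.succ • (dps^[n - k] p * dps^[k + 1] q)) +
              1 • (dps^[n + 1] p * dps^[0] q) +
            ∑ k ∈ range n.succ, n.choose k • (dps^[n - k] p * dps^[k + 1] q) :=
        ?_
      _ = ((∑ k ∈ range n.succ, n.choose k • (dps^[n - k] p * dps^[k + 1] q)) +
              ∑ k ∈ range n.succ,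
                n.choose k.succ • (dps^[n - k] p * dps^[k + 1] q)) +
            1 • (dps^[n + 1] p * dps^[0] q) := by
        rw [add_comm, add_assoc]
      _ = (∑ i ∈ range n.succ,
              (n + 1).choose (i + 1) • (dps^[n + 1 - (i + 1)] p * dps^[i + 1] q)) +
            1 • (dps^[n + 1] p * dps^[0] q) := by
        simp_rw [Nat.choose_succ_succ, Nat.succ_sub_succ, add_smul, sum_add_distrib]
      _ = ∑ k ∈ range n.succ.succ,
            n.succ.choose k • (dps^[n.succ - k] p * dps^[k] q) := by
        rw [sum_range_succ' _ n.succ, Nat.choose_zero_right, tsub_zero]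
    congr
    refine (sum_range_succ' _ _).trans (congr_arg₂ (· + ·) ?_ ?_)
    · rw [sum_range_succ, Nat.choose_succ_self, zero_smul, add_zero]
      refine sum_congr rfl fun k hk => ?_
      rw [mem_range] at hk
      congr
      omega
    · rw [Nat.choose_zero_right, tsub_zero]

lemma negpow {l i : ℕ} (h : l ≤ i) : (-1 : ℝ) ^ (i - l) = (-1) ^ i * (-1) ^ l := by
  have h1 : (-1 : ℝ) ^ (i - l) * (-1) ^ l = (-1) ^ i := by
    rw [← pow_add]; congr 1; omega
  have hll : ((-1 : ℝ) ^ l) * ((-1) ^ l) = 1 := by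
    rw [← pow_add, ← two_mul, pow_mul]; norm_num
  calc (-1 : ℝ) ^ (i - l) = (-1 : ℝ) ^ (i - l) * (((-1 : ℝ) ^ l) * ((-1) ^ l)) := by
        rw [hll, mul_one]
    _ = ((-1 : ℝ) ^ (i - l) * (-1) ^ l) * (-1) ^ l := by ring
    _ = (-1) ^ i * (-1) ^ l := by rw [h1]

lemma one_add_mul_mkG : (1 + X : ℝ⟦X⟧) * mkG (-1) 0 = 1 := by
  have := geom_zero (-1)
  rw [map_neg, map_one] at this
  calc (1 + X : ℝ⟦X⟧) * mkG (-1) 0 = (1 - (-1 : ℝ⟦X⟧) * X) * mkG (-1) 0 := by ring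
    _ = 1 := this

lemma Vlem (x : ℝ) (i : ℕ) :
    dps^[i] (Dser x)⁻¹ =
      ∑ l ∈ range (i + 1),
        C ((-1) ^ i * (-1) ^ l * ((Nat.factorial i : ℝ) / (Nat.factorial l : ℝ))) *
          (mkG (-1) (i - l) * dps^[l] ((1 + X) * (Dser x)⁻¹)) := by
  have hgQF : (Dser x)⁻¹ = mkG (-1) 0 * ((1 + X) * (Dser x)⁻¹) := by
    rw [← mul_assoc, mul_comm (mkG (-1) 0) (1 + X), one_add_mul_mkG, one_mul]
  calc dps^[i] (Dser x)⁻¹ = dps^[i] (mkG (-1) 0 * ((1 + X) * (Dser x)⁻¹)) := by rw [← hgQF]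
    _ = ∑ l ∈ range (i + 1),
          (i.choose l • (dps^[i - l] (mkG (-1) 0) * dps^[l] ((1 + X) * (Dser x)⁻¹))) :=
        iterate_dps_mul _ _
    _ = _ := by
        refine sum_congr rfl fun l hl => ?_
        rw [mem_range] at hl
        have hl' : l ≤ i := by omega
        have hl0 : (Nat.factorial l : ℝ) ≠ 0 := by positivity
        have hcf : (i.choose l : ℝ) * (Nat.factorial (i - l) : ℝ) =
            (Nat.factorial i : ℝ) / (Nat.factorial l : ℝ) := by
          have h := Nat.choose_mul_factorial_mul_factorial hl'
          rw [mul_right_comm] at h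
          field_simp
          exact_mod_cast congrArg (Nat.cast : ℕ → ℝ) h
        have hc : (-1 : ℝ) ^ i * (-1) ^ l * ((Nat.factorial i : ℝ) / (Nat.factorial l : ℝ))
            = (i.choose l : ℝ) * ((-1) ^ (i - l) * (Nat.factorial (i - l) : ℝ)) := by
          rw [negpow hl']
          rw [← hcf]
          ring
        rw [dps_iter_mkG (i - l), nsmul_eq_mul, hc]
        simp only [map_mul, map_natCast]
        ring

/-- for `N ≥ 1`, `n ≥ 0` and real `x ≠ 0`,
`Σ_{l=0}^n (-1)^{n-l} C(N+n-l, n-l) W_l^{(N+1)}(x) = (1/(2^N N!)) Σ_{i=1}^N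
  Σ_{l=0}^i (-1)^{i-l} a(i,N) (i!/l!) Σ_{m+s+p=n} (-1)^s C(2N+m-i-1, m)
  C(i-l+s, s) (p+l)_l x^{i-2N-m} W_{p+l}(x)`, where the inner sum over triples
`(m,s,p)` of nonnegative integers with `m+s+p = n` is realized as a double sum
over `m ≤ n`, `s ≤ n - m` with `p = n - m - s`, and `a` is the family defined
by the recursion `a(1,1) = 1`, `a(1,N+1) = (2N-1)a(1,N)`,
`a(N+1,N+1) = a(N,N)`, `a(i,N+1) = a(i-1,N) + (2N-i)a(i,N)` for `2 ≤ i ≤ N`. -/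
theorem stmt9
    (a : ℕ → ℕ → ℝ)
    (ha11 : a 1 1 = 1)
    (ha1 : ∀ N : ℕ, 1 ≤ N → a 1 (N + 1) = (2 * (N : ℝ) - 1) * a 1 N)
    (hadiag : ∀ N : ℕ, 1 ≤ N → a (N + 1) (N + 1) = a N N)
    (harec : ∀ N i : ℕ, 2 ≤ i → i ≤ N →
      a i (N + 1) = a (i - 1) N + (2 * (N : ℝ) - (i : ℝ)) * a i N)
    (x : ℝ) (hx : x ≠ 0) (N n : ℕ) (hN : 1 ≤ N) :
    ∑ l ∈ Finset.range (n + 1),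
        (-1 : ℝ) ^ (n - l) * (Nat.choose (N + n - l) (n - l) : ℝ) * chebW x (N + 1) l =
      (1 / (2 ^ N * (Nat.factorial N : ℝ))) *
        ∑ i ∈ Finset.Icc 1 N, ∑ l ∈ Finset.range (i + 1),
          (-1 : ℝ) ^ (i - l) * a i N * ((Nat.factorial i : ℝ) / (Nat.factorial l : ℝ)) *
            ∑ m ∈ Finset.range (n + 1), ∑ s ∈ Finset.range (n + 1 - m),
              (-1 : ℝ) ^ s * (Nat.choose (2 * N + m - i - 1) m : ℝ) *
                (Nat.choose (i - l + s) s : ℝ) *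
                fallingFactorial (((n - m - s : ℕ) : ℝ) + (l : ℝ)) l *
                x ^ ((i : ℤ) - 2 * (N : ℤ) - (m : ℤ)) *
                chebW x 1 ((n - m - s) + l) := by
  simp only [chebW, pow_one]
  have hu0 : (C x - X : ℝ⟦X⟧) ≠ 0 := by
    intro h
    have h2 := congrArg (constantCoeff) h
    simp at h2
    exact hx h2
  have hgeomB : ∀ d : ℕ, (1 + X : ℝ⟦X⟧) ^ (d + 1) * mkG (-1) d = 1 := by
    intro d
    have h1 := geom_inv (-1) d
    rw [map_neg, map_one] at h1
    rw [show (1 + X : ℝ⟦X⟧) = 1 - (-1 : ℝ⟦X⟧) * X from by ring]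
    exact h1
  have hfac : (C x - X : ℝ⟦X⟧) = C x * (1 - C x⁻¹ * X) := by
    rw [mul_sub, mul_one, ← mul_assoc, ← map_mul, mul_inv_cancel₀ hx, map_one, one_mul]
  have hWinv : ∀ k : ℕ, (C x - X) ^ (k + 1) * (C (x⁻¹ ^ (k + 1)) * mkG x⁻¹ k) = 1 := by
    intro k
    calc (C x - X) ^ (k + 1) * (C (x⁻¹ ^ (k + 1)) * mkG x⁻¹ k)
        = ((C x) ^ (k + 1) * C (x⁻¹ ^ (k + 1))) *
            ((1 - C x⁻¹ * X) ^ (k + 1) * mkG x⁻¹ k) := by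
          rw [hfac, mul_pow]; ring
      _ = 1 := by
          rw [geom_inv, ← map_pow, ← map_mul, ← mul_pow, mul_inv_cancel₀ hx, one_pow, map_one,
            mul_one]
  have hWu : (C x - X) ^ (2 * N) * (C (x⁻¹ ^ (2 * N)) * mkG x⁻¹ (2 * N - 1)) = 1 := by
    have h1 := hWinv (2 * N - 1)
    rw [show 2 * N - 1 + 1 = 2 * N from by omega] at h1
    exact h1
  -- LHS equals coeff n of g^(N+1)
  have hL : ∑ l ∈ Finset.range (n + 1),
      (-1 : ℝ) ^ (n - l) * ((N + n - l).choose (n - l) : ℝ) *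
        (PowerSeries.coeff l) (((1 + PowerSeries.X) * (Dser x)⁻¹) ^ (N + 1))
      = coeff n (((Dser x)⁻¹) ^ (N + 1)) := by
    have h1 : mkG (-1) N * ((1 + X) * (Dser x)⁻¹) ^ (N + 1) = ((Dser x)⁻¹) ^ (N + 1) := by
      rw [mul_pow, ← mul_assoc, mul_comm (mkG (-1) N) ((1 + X : ℝ⟦X⟧) ^ (N + 1)), hgeomB N,
        one_mul]
    rw [← h1, coeff_mul, Finset.Nat.sum_antidiagonal_eq_sum_range_succ_mk]
    dsimp only
    rw [← Finset.sum_range_reflect]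
    refine sum_congr rfl fun l hl => ?_
    rw [mem_range] at hl
    rw [coeff_mkG]
    rw [show n + 1 - 1 - l = n - l from by omega, show n - (n - l) = l from by omega,
      show N + n - (n - l) = N + l from by omega]
    ring
  rw [hL]
  -- triple sum is a coefficient of a product of three series
  have hstep1 : ∀ i ∈ Finset.Icc 1 N, ∀ l ∈ Finset.range (i + 1),
      (∑ m ∈ Finset.range (n + 1), ∑ s ∈ Finset.range (n + 1 - m),
        (-1 : ℝ) ^ s * ((2 * N + m - i - 1).choose m : ℝ) * ((i - l + s).choose s : ℝ) *
            fallingFactorial (((n - m - s : ℕ) : ℝ) + (l : ℝ)) l *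
            x ^ ((i : ℤ) - 2 * (N : ℤ) - (m : ℤ)) *
            (PowerSeries.coeff ((n - m - s) + l)) ((1 + PowerSeries.X) * (Dser x)⁻¹))
        = coeff n ((C (x⁻¹ ^ (2 * N - i)) * mkG x⁻¹ (2 * N - i - 1)) *
            (mkG (-1) (i - l) * dps^[l] ((1 + X) * (Dser x)⁻¹))) := by
    intro i hi l hl
    rw [mem_Icc] at hi
    rw [mem_range] at hl
    rw [coeff_mul, Finset.Nat.sum_antidiagonal_eq_sum_range_succ_mk]
    dsimp only
    refine sum_congr rfl fun m hm => ?_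
    rw [mem_range] at hm
    rw [coeff_C_mul, coeff_mul, Finset.Nat.sum_antidiagonal_eq_sum_range_succ_mk]
    dsimp only
    rw [mul_sum, show n + 1 - m = n - m + 1 from by omega]
    refine sum_congr rfl fun s hs => ?_
    rw [mem_range] at hs
    rw [coeff_mkG, coeff_mkG, coeff_iter]
    have hxp : x ^ ((i : ℤ) - 2 * (N : ℤ) - (m : ℤ)) = x⁻¹ ^ (2 * N - i) * x⁻¹ ^ m := by
      have he : (i : ℤ) - 2 * (N : ℤ) - (m : ℤ) = -(((2 * N - i + m : ℕ) : ℤ)) := by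
        push_cast [Nat.cast_sub (show i ≤ 2 * N from by omega)]
        ring
      rw [he, zpow_neg, zpow_natCast, pow_add, mul_inv, inv_pow, inv_pow]
    have hff : fallingFactorial (((n - m - s : ℕ) : ℝ) + (l : ℝ)) l
        = ∏ j ∈ Finset.range l, (((n - m - s) + l - j : ℕ) : ℝ) := by
      unfold fallingFactorial
      refine prod_congr rfl fun j hj => ?_
      rw [mem_range] at hj
      rw [Nat.cast_sub (show j ≤ n - m - s + l from by omega), Nat.cast_add]
    rw [hxp, hff, show 2 * N + m - i - 1 = 2 * N - i - 1 + m from by omega]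
    ring
  rw [Finset.sum_congr rfl (fun i hi => Finset.sum_congr rfl
    (fun l hl => by rw [hstep1 i hi l hl]))]
  -- sum over l gives the i-th iterated derivative
  have hinner : ∀ i ∈ Finset.Icc 1 N,
      (∑ l ∈ Finset.range (i + 1), (-1 : ℝ) ^ (i - l) * a i N *
          ((Nat.factorial i : ℝ) / (Nat.factorial l : ℝ)) *
          coeff n ((C (x⁻¹ ^ (2 * N - i)) * mkG x⁻¹ (2 * N - i - 1)) *
            (mkG (-1) (i - l) * dps^[l] ((1 + X) * (Dser x)⁻¹))))
      = a i N * coeff n ((C (x⁻¹ ^ (2 * N - i)) * mkG x⁻¹ (2 * N - i - 1)) *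
          dps^[i] (Dser x)⁻¹) := by
    intro i hi
    rw [Vlem x i, mul_sum, map_sum, mul_sum]
    refine sum_congr rfl fun l hl => ?_
    rw [mem_range] at hl
    have hcomm : (C (x⁻¹ ^ (2 * N - i)) * mkG x⁻¹ (2 * N - i - 1)) *
        (C ((-1 : ℝ) ^ i * (-1) ^ l * ((Nat.factorial i : ℝ) / (Nat.factorial l : ℝ))) *
          (mkG (-1) (i - l) * dps^[l] ((1 + X) * (Dser x)⁻¹)))
        = C ((-1 : ℝ) ^ i * (-1) ^ l * ((Nat.factorial i : ℝ) / (Nat.factorial l : ℝ))) *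
          ((C (x⁻¹ ^ (2 * N - i)) * mkG x⁻¹ (2 * N - i - 1)) *
            (mkG (-1) (i - l) * dps^[l] ((1 + X) * (Dser x)⁻¹))) := by ring
    rw [hcomm, coeff_C_mul, negpow (show l ≤ i from by omega)]
    ring
  rw [Finset.sum_congr rfl hinner]
  -- convert the Icc-sum to a range-sum
  have hIcc : (∑ i ∈ Finset.Icc 1 N, a i N * coeff n
        ((C (x⁻¹ ^ (2 * N - i)) * mkG x⁻¹ (2 * N - i - 1)) * dps^[i] (Dser x)⁻¹))
      = ∑ j ∈ Finset.range N, a (j + 1) N * coeff n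
        ((C (x⁻¹ ^ (2 * N - (j + 1))) * mkG x⁻¹ (2 * N - (j + 1) - 1)) *
          dps^[j + 1] (Dser x)⁻¹) := by
    refine Finset.sum_nbij' (fun i => i - 1) (fun j => j + 1)
      (fun p hp => ?_) (fun q hq => ?_) (fun p hp => ?_) (fun q hq => ?_) (fun p hp => ?_)
    · rw [mem_Icc] at hp; rw [mem_range]; omega
    · rw [mem_range] at hq; rw [mem_Icc]; omega
    · rw [mem_Icc] at hp; omega
    · omega
    · rw [mem_Icc] at hp
      rw [show p - 1 + 1 = p from by omega]
  rw [hIcc]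
  -- identify the A-series with u^i * W
  have hAi : ∀ j, j < N →
      (C (x⁻¹ ^ (2 * N - (j + 1))) * mkG x⁻¹ (2 * N - (j + 1) - 1))
      = (C x - X) ^ (j + 1) * (C (x⁻¹ ^ (2 * N)) * mkG x⁻¹ (2 * N - 1)) := by
    intro j hj
    apply mul_left_cancel₀ (pow_ne_zero (2 * N - (j + 1)) hu0)
    have h1 : (C x - X) ^ (2 * N - (j + 1)) *
        (C (x⁻¹ ^ (2 * N - (j + 1))) * mkG x⁻¹ (2 * N - (j + 1) - 1)) = 1 := by
      have h2 := hWinv (2 * N - (j + 1) - 1)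
      rw [show 2 * N - (j + 1) - 1 + 1 = 2 * N - (j + 1) from by omega] at h2
      exact h2
    rw [h1, ← mul_assoc, ← pow_add, show 2 * N - (j + 1) + (j + 1) = 2 * N from by omega, hWu]
  rw [Finset.sum_congr rfl (fun j hj => by rw [hAi j (mem_range.mp hj)])]
  -- apply the key identity
  have hfin : (∑ j ∈ Finset.range N, a (j + 1) N * coeff n
        (((C x - X) ^ (j + 1) * (C (x⁻¹ ^ (2 * N)) * mkG x⁻¹ (2 * N - 1))) *
          dps^[j + 1] (Dser x)⁻¹))
      = 2 ^ N * (Nat.factorial N : ℝ) * coeff n (((Dser x)⁻¹) ^ (N + 1)) := by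
    calc (∑ j ∈ Finset.range N, a (j + 1) N * coeff n
          (((C x - X) ^ (j + 1) * (C (x⁻¹ ^ (2 * N)) * mkG x⁻¹ (2 * N - 1))) *
            dps^[j + 1] (Dser x)⁻¹))
        = coeff n ((C (x⁻¹ ^ (2 * N)) * mkG x⁻¹ (2 * N - 1)) *
            ∑ j ∈ Finset.range N, C (a (j + 1) N) *
              ((C x - X) ^ (j + 1) * dps^[j + 1] (Dser x)⁻¹)) := by
          rw [mul_sum, map_sum]
          refine sum_congr rfl fun j hj => ?_
          have h3 : (C (x⁻¹ ^ (2 * N)) * mkG x⁻¹ (2 * N - 1)) *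
              (C (a (j + 1) N) * ((C x - X) ^ (j + 1) * dps^[j + 1] (Dser x)⁻¹))
              = C (a (j + 1) N) * (((C x - X) ^ (j + 1) *
                  (C (x⁻¹ ^ (2 * N)) * mkG x⁻¹ (2 * N - 1))) * dps^[j + 1] (Dser x)⁻¹) := by
            ring
          rw [h3, coeff_C_mul]
      _ = coeff n ((C (x⁻¹ ^ (2 * N)) * mkG x⁻¹ (2 * N - 1)) *
            (C (2 ^ N * (Nat.factorial N : ℝ)) *
              ((C x - X) ^ (2 * N) * ((Dser x)⁻¹) ^ (N + 1)))) := by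
          rw [keyA a ha11 ha1 hadiag harec x N hN]
      _ = 2 ^ N * (Nat.factorial N : ℝ) * coeff n (((Dser x)⁻¹) ^ (N + 1)) := by
          have h4 : (C (x⁻¹ ^ (2 * N)) * mkG x⁻¹ (2 * N - 1)) *
              (C (2 ^ N * (Nat.factorial N : ℝ)) *
                ((C x - X) ^ (2 * N) * ((Dser x)⁻¹) ^ (N + 1)))
              = C (2 ^ N * (Nat.factorial N : ℝ)) *
                (((C x - X) ^ (2 * N) * (C (x⁻¹ ^ (2 * N)) * mkG x⁻¹ (2 * N - 1))) *
                  ((Dser x)⁻¹) ^ (N + 1)) := by ring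
          rw [h4, hWu, one_mul, coeff_C_mul]
  rw [hfin]
  have hc0 : (2 : ℝ) ^ N * (Nat.factorial N : ℝ) ≠ 0 := by positivity
  field_simp
end
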